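/- arXiv:2512.08200 — 3 statements merged into one kernel-verified Lean document; each statement's English description precedes it below -/
import Mathlib

section
/- Let X, X_1, X_2, … be i.i.d. random vectors in ℝ^d with mean μ = E[X], let X̄_n = n^{-1} Σ_{i=1}^n X_i, and let λ ≥ 1. If E[‖X‖^{2λ}] < ∞, then for every fixed ε > 0, P( ‖X̄_n − μ‖ > ε ) = O(n^{-λ}) as n → ∞. -/
open MeasureTheory ProbabilityTheory BigOperators Finset Real Filter
open scoped ENNReal NNReal

section Helpers
open scoped ENNReal NNReal
set_option maxHeartbeats 1000000

lemma exp_le_quad {x : ℝ} (h : |x| ≤ 1) : Real.exp x ≤ 1 + x + x ^ 2 := by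
  have := Real.exp_bound h (n := 2) (by norm_num)
  have h2 : ∑ i ∈ Finset.range 2, x ^ i / i.factorial = 1 + x := by
    simp [Finset.sum_range_succ]
  rw [h2] at this
  have habs : Real.exp x - (1 + x) ≤ |x| ^ 2 * (3 / (2 * 2)) := by
    have := abs_le.1 this
    exact this.2.trans (le_of_eq (by norm_num [Nat.factorial]))
  rw [sq_abs] at habs
  nlinarith [sq_nonneg x, habs]

/-- patch: an eventual bound of the form `C n^{-lam}` can be upgraded to all `n ≥ 1`. -/
lemma patch {Ω : Type*} [MeasurableSpace Ω] (P : Measure Ω) [IsProbabilityMeasure P]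
    (s : ℕ → Set Ω) (lam : ℝ) (hlam : 0 < lam)
    (h : ∃ N : ℕ, ∃ C : ℝ, 0 ≤ C ∧ ∀ n : ℕ, N ≤ n →
      P (s n) ≤ ENNReal.ofReal (C * (n : ℝ) ^ (-lam))) :
    ∃ C : ℝ, 0 ≤ C ∧ ∀ n : ℕ, 1 ≤ n →
      P (s n) ≤ ENNReal.ofReal (C * (n : ℝ) ^ (-lam)) := by
  obtain ⟨N, C, hC0, hC⟩ := h
  refine ⟨max C ((N : ℝ) ^ lam), le_trans hC0 (le_max_left _ _), fun n hn => ?_⟩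
  rcases le_or_gt N n with hNn | hnN
  · refine (hC n hNn).trans (ENNReal.ofReal_le_ofReal ?_)
    have : (0:ℝ) ≤ (n : ℝ) ^ (-lam) := Real.rpow_nonneg (by positivity) _
    exact mul_le_mul_of_nonneg_right (le_max_left _ _) this
  · -- n < N : use P ≤ 1 ≤ N^lam * n^{-lam}
    have hn0 : (0:ℝ) < (n:ℝ) := by exact_mod_cast hn
    have h1 : (1:ℝ) ≤ (N : ℝ) ^ lam * (n : ℝ) ^ (-lam) := by
      rw [Real.rpow_neg hn0.le, ← div_eq_mul_inv, le_div_iff₀ (Real.rpow_pos_of_pos hn0 _)]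
      rw [one_mul]
      exact Real.rpow_le_rpow hn0.le (by exact_mod_cast hnN.le) hlam.le
    calc P (s n) ≤ 1 := prob_le_one
    _ = ENNReal.ofReal 1 := by simp
    _ ≤ ENNReal.ofReal (max C ((N : ℝ) ^ lam) * (n : ℝ) ^ (-lam)) := by
        refine ENNReal.ofReal_le_ofReal (h1.trans ?_)
        have : (0:ℝ) ≤ (n : ℝ) ^ (-lam) := Real.rpow_nonneg (by positivity) _
        exact mul_le_mul_of_nonneg_right (le_max_right _ _) this

-- (a+b)^q ≤ 2^q (a^q + b^q) for a,b ≥ 0, q ≥ 0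
lemma add_rpow_le {a b q : ℝ} (ha : 0 ≤ a) (hb : 0 ≤ b) (hq : 0 ≤ q) :
    (a + b) ^ q ≤ 2 ^ q * (a ^ q + b ^ q) := by
  have hm : a + b ≤ 2 * max a b := by
    rcases max_cases a b with ⟨h1, h2⟩ | ⟨h1, h2⟩ <;> rw [h1] <;> linarith
  calc (a + b) ^ q ≤ (2 * max a b) ^ q :=
        Real.rpow_le_rpow (by linarith) hm hq
    _ = 2 ^ q * (max a b) ^ q := Real.mul_rpow (by norm_num) (le_max_of_le_left ha)
    _ ≤ 2 ^ q * (a ^ q + b ^ q) := by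
        gcongr
        rcases max_cases a b with ⟨h1, _⟩ | ⟨h1, _⟩ <;> rw [h1]
        · nlinarith [Real.rpow_nonneg hb q]
        · nlinarith [Real.rpow_nonneg ha q]

-- |x|^p ≤ 1 + |x|^q for 0 ≤ p ≤ q
lemma abs_rpow_le_one_add {x p q : ℝ} (hp : 0 ≤ p) (hpq : p ≤ q) :
    |x| ^ p ≤ 1 + |x| ^ q := by
  rcases le_or_gt |x| 1 with h | h
  · have : |x| ^ p ≤ 1 := Real.rpow_le_one (abs_nonneg x) h hp
    have := Real.rpow_nonneg (abs_nonneg x) q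
    linarith
  · have : |x| ^ p ≤ |x| ^ q := Real.rpow_le_rpow_of_exponent_le h.le hpq
    linarith

variable {Ω : Type*} [MeasurableSpace Ω] {P : Measure Ω} [IsProbabilityMeasure P]

lemma integrable_abs_rpow_of_le {Z : Ω → ℝ} (hZ : Measurable Z) {p q : ℝ}
    (hp : 0 ≤ p) (hpq : p ≤ q) (hmom : Integrable (fun ω => |Z ω| ^ q) P) :
    Integrable (fun ω => |Z ω| ^ p) P := by
  refine Integrable.mono' (g := fun ω => 1 + |Z ω| ^ q)
    ((integrable_const 1).add hmom) ?_ (ae_of_all _ fun ω => ?_)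
  · exact ((Real.continuous_rpow_const hp).measurable.comp hZ.abs).aestronglyMeasurable
  · rw [Real.norm_eq_abs, abs_of_nonneg (Real.rpow_nonneg (abs_nonneg _) _)]
    exact abs_rpow_le_one_add hp hpq

lemma integrable_abs_sub_rpow {Z : Ω → ℝ} (hZ : Measurable Z) {q : ℝ} (hq : 0 ≤ q)
    (hmom : Integrable (fun ω => |Z ω| ^ q) P) (m : ℝ) :
    Integrable (fun ω => |Z ω - m| ^ q) P := by
  refine Integrable.mono' (g := fun ω => 2 ^ q * (|Z ω| ^ q + |m| ^ q))
    ((hmom.add (integrable_const _)).const_mul _) ?_ (ae_of_all _ fun ω => ?_)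
  · exact ((Real.continuous_rpow_const hq).measurable.comp
      (hZ.sub measurable_const).abs).aestronglyMeasurable
  · rw [Real.norm_eq_abs, abs_of_nonneg (Real.rpow_nonneg (abs_nonneg _) _)]
    calc |Z ω - m| ^ q ≤ (|Z ω| + |m|) ^ q := by
          apply Real.rpow_le_rpow (abs_nonneg _) (abs_sub _ _) hq
      _ ≤ 2 ^ q * (|Z ω| ^ q + |m| ^ q) := add_rpow_le (abs_nonneg _) (abs_nonneg _) hq



-- Markov inequality in ofReal form
lemma markov_abs {f : Ω → ℝ} (hf : Measurable f) {q : ℝ} (hq : 0 ≤ q)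
    (hint : Integrable (fun ω => |f ω| ^ q) P) {M : ℝ} (hM : 0 < M) :
    P {ω | M < |f ω|} ≤ ENNReal.ofReal ((∫ ω, |f ω| ^ q ∂P) / M ^ q) := by
  have hsub : {ω | M < |f ω|} ⊆ {ω | M ^ q ≤ |f ω| ^ q} := fun ω hω =>
    Real.rpow_le_rpow hM.le (le_of_lt hω) hq
  have hmar := mul_meas_ge_le_integral_of_nonneg
    (ae_of_all P fun ω => Real.rpow_nonneg (abs_nonneg (f ω)) q) hint (M ^ q)
  have hMq : (0:ℝ) < M ^ q := Real.rpow_pos_of_pos hM q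
  have h1 : (P {ω | M ^ q ≤ |f ω| ^ q}).toReal ≤ (∫ ω, |f ω| ^ q ∂P) / M ^ q := by
    rw [le_div_iff₀ hMq]; rw [measureReal_def] at hmar; linarith [hmar]
  calc P {ω | M < |f ω|} ≤ P {ω | M ^ q ≤ |f ω| ^ q} := measure_mono hsub
    _ = ENNReal.ofReal ((P {ω | M ^ q ≤ |f ω| ^ q}).toReal) :=
        (ENNReal.ofReal_toReal (measure_ne_top _ _)).symm
    _ ≤ _ := ENNReal.ofReal_le_ofReal h1




lemma cheb_case (Z : ℕ → Ω → ℝ) (hmeas : ∀ i, Measurable (Z i))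
    (hindep : iIndepFun Z P)
    (hident : ∀ i, IdentDistrib (Z i) (Z 0) P P)
    (hZint : Integrable (Z 0) P) (hZsq : Integrable (fun ω => (Z 0 ω) ^ 2) P)
    (δ : ℝ) (hδ : 0 < δ) :
    ∃ C : ℝ, 0 ≤ C ∧ ∀ n : ℕ, 1 ≤ n →
      P {ω | (n:ℝ) * δ ≤ (∑ i ∈ Finset.range n, Z i ω) - n * (∫ ω, Z 0 ω ∂P)}
        ≤ ENNReal.ofReal (C * ((n:ℝ) ^ (-1 : ℝ))) := by
  set m := ∫ ω, Z 0 ω ∂P with hm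
  have hL20 : MemLp (Z 0) 2 P :=
    (memLp_two_iff_integrable_sq (hmeas 0).aestronglyMeasurable).2 hZsq
  have hL2 : ∀ i, MemLp (Z i) 2 P := fun i => (hident i).memLp_iff.2 hL20
  have hint : ∀ i, Integrable (Z i) P := fun i => (hident i).integrable_iff.2 hZint
  refine ⟨variance (Z 0) P / δ ^ 2, div_nonneg (variance_nonneg _ _) (sq_nonneg δ), fun n hn => ?_⟩
  have hn0 : (0:ℝ) < n := by exact_mod_cast hn
  set S : Ω → ℝ := ∑ i ∈ Finset.range n, Z i with hS
  have hSL2 : MemLp S 2 P := memLp_finset_sum' _ fun i _ => hL2 i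
  have hES : ∫ ω, S ω ∂P = n * m := by
    rw [hS]
    rw [show (∫ ω, (∑ i ∈ Finset.range n, Z i) ω ∂P) = ∫ ω, ∑ i ∈ Finset.range n, Z i ω ∂P
      from by simp]
    rw [integral_finset_sum _ fun i _ => hint i]
    rw [Finset.sum_congr rfl fun i _ => (hident i).integral_eq]
    simp [mul_comm, hm]
  have hVar : variance S P = n * variance (Z 0) P := by
    rw [hS, IndepFun.variance_sum (fun i _ => hL2 i)
      (fun i _ j _ hij => hindep.indepFun hij)]
    rw [Finset.sum_congr rfl fun i _ => (hident i).variance_eq]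
    simp [mul_comm]
  have hcheb := meas_ge_le_variance_div_sq (μ := P) hSL2 (c := n * δ) (by positivity)
  have hsub : {ω | (n:ℝ) * δ ≤ (∑ i ∈ Finset.range n, Z i ω) - n * m}
      ⊆ {ω | (n:ℝ) * δ ≤ |S ω - ∫ ω, S ω ∂P|} := by
    intro ω hω
    simp only [Set.mem_setOf_eq] at hω ⊢
    rw [hES]
    have : S ω = ∑ i ∈ Finset.range n, Z i ω := by simp [hS]
    rw [this]
    exact hω.trans (le_abs_self _)
  refine (measure_mono hsub).trans (hcheb.trans (ENNReal.ofReal_le_ofReal ?_))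
  rw [hVar, Real.rpow_neg_one]
  have heq : (n:ℝ) * variance (Z 0) P / ((n:ℝ) * δ) ^ 2
      = variance (Z 0) P / δ ^ 2 * ((n:ℝ))⁻¹ := by
    field_simp
  exact le_of_eq heq

lemma chernoff_case (Z : ℕ → Ω → ℝ) (hmeas : ∀ i, Measurable (Z i))
    (hindep : iIndepFun Z P)
    (hident : ∀ i, IdentDistrib (Z i) (Z 0) P P)
    (lam : ℝ) (hlam : 1 < lam)
    (hmom : Integrable (fun ω => |Z 0 ω| ^ (2 * lam)) P)
    (hZint : Integrable (Z 0) P)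
    (δ : ℝ) (hδ : 0 < δ) :
    ∃ N : ℕ, ∃ C : ℝ, 0 ≤ C ∧ ∀ n : ℕ, N ≤ n →
      P {ω | (n:ℝ) * δ ≤ (∑ i ∈ Finset.range n, Z i ω) - n * (∫ ω, Z 0 ω ∂P)}
        ≤ ENNReal.ofReal (C * (n:ℝ) ^ (-lam)) := by
  have hlam0 : (0:ℝ) < lam := by linarith
  have hq0 : (0:ℝ) ≤ 2 * lam := by linarith
  have hq2 : (2:ℝ) ≤ 2 * lam := by linarith
  set m := ∫ ω, Z 0 ω ∂P with hm
  set W : ℕ → Ω → ℝ := fun i ω => Z i ω - m with hW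
  have hWmeas : ∀ i, Measurable (W i) := fun i => (hmeas i).sub measurable_const
  have hWident : ∀ i, IdentDistrib (W i) (W 0) P P := fun i =>
    (hident i).comp (measurable_id.sub measurable_const)
  have hWmom : Integrable (fun ω => |W 0 ω| ^ (2 * lam)) P :=
    integrable_abs_sub_rpow (hmeas 0) hq0 hmom m
  set A := ∫ ω, |W 0 ω| ^ (2 * lam) ∂P with hA
  have hA0 : 0 ≤ A := integral_nonneg fun ω => Real.rpow_nonneg (abs_nonneg _) _
  have hWsq : Integrable (fun ω => (W 0 ω) ^ 2) P := by
    have h := integrable_abs_rpow_of_le (P := P) (hWmeas 0) (by norm_num : (0:ℝ) ≤ 2) hq2 hWmom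
    refine h.congr (ae_of_all _ fun ω => ?_)
    simp only
    rw [show ((2:ℝ)) = ((2:ℕ) : ℝ) by norm_num, Real.rpow_natCast, sq_abs]
  set σ2 := ∫ ω, (W 0 ω) ^ 2 ∂P with hσ2def
  have hσ2 : 0 ≤ σ2 := integral_nonneg fun ω => sq_nonneg _
  have hWint : Integrable (W 0) P := hZint.sub (integrable_const m)
  have hEW : ∫ ω, W 0 ω ∂P = 0 := by
    rw [hW]
    simp only
    rw [integral_sub hZint (integrable_const m), integral_const]
    simp [hm]
  set a := (1 + lam) / (2 * lam) with ha_def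
  have ha : 0 < a := by positivity
  have ha1 : a < 1 := by
    rw [ha_def, div_lt_one (by positivity)]; linarith
  have h2alam : 2 * lam * a = 1 + lam := by
    rw [ha_def]; field_simp
  set b := 1 - a with hb_def
  have hb : 0 < b := by simp [hb_def]; linarith
  -- eventual conditions
  have htendM : Tendsto (fun n : ℕ => (n:ℝ) ^ a) atTop atTop :=
    (tendsto_rpow_atTop ha).comp tendsto_natCast_atTop_atTop
  have hcond1 : ∀ᶠ n : ℕ in atTop, 2 * σ2 ≤ δ * (n:ℝ) ^ a := by
    filter_upwards [htendM.eventually_ge_atTop (2 * σ2 / δ)] with n hn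
    rw [div_le_iff₀ hδ] at hn; linarith
  have hcond2 : ∀ᶠ n : ℕ in atTop, A * ((n:ℝ) ^ a) ^ (1 - 2 * lam) ≤ δ / 2 := by
    have h1 : Tendsto (fun x : ℝ => A * x ^ (-(2 * lam - 1))) atTop (nhds (A * 0)) :=
      (tendsto_rpow_neg_atTop (by linarith)).const_mul A
    rw [mul_zero] at h1
    have h2 := (h1.comp htendM).eventually_le_const (show (0:ℝ) < δ / 2 by positivity)
    filter_upwards [h2] with n hn
    simpa [show -(2 * lam - 1) = 1 - 2 * lam by ring] using hn
  have hcond3 : ∀ᶠ n : ℕ in atTop, Real.exp (-(δ / 8) * (n:ℝ) ^ b) ≤ (n:ℝ) ^ (-lam) := by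
    have h0 : Tendsto (fun x : ℝ => x ^ (lam / b) * Real.exp (-(δ / 8) * x)) atTop (nhds 0) :=
      tendsto_rpow_mul_exp_neg_mul_atTop_nhds_zero (lam / b) (δ / 8) (by positivity)
    have htendb : Tendsto (fun n : ℕ => (n:ℝ) ^ b) atTop atTop :=
      (tendsto_rpow_atTop hb).comp tendsto_natCast_atTop_atTop
    have h1 := (h0.comp htendb).eventually_le_const (show (0:ℝ) < 1 by norm_num)
    filter_upwards [h1, Filter.eventually_ge_atTop 1] with n hn hn1
    have hn0 : (0:ℝ) < n := by exact_mod_cast hn1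
    have hkey : ((n:ℝ) ^ b) ^ (lam / b) = (n:ℝ) ^ lam := by
      rw [← Real.rpow_mul hn0.le, mul_div_cancel₀ _ (ne_of_gt hb)]
    simp only [Function.comp] at hn
    rw [hkey] at hn
    have hpow : (0:ℝ) < (n:ℝ) ^ lam := Real.rpow_pos_of_pos hn0 _
    rw [Real.rpow_neg hn0.le]
    rw [← mul_le_mul_iff_right₀ hpow, mul_inv_cancel₀ (ne_of_gt hpow)]
    linarith [hn]
  obtain ⟨N, hN⟩ := Filter.eventually_atTop.1
    ((hcond1.and (hcond2.and hcond3)).and (Filter.eventually_ge_atTop 1))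
  refine ⟨N, A + 1, by linarith, fun n hn => ?_⟩
  obtain ⟨⟨hc1, hc2, hc3⟩, hn1⟩ := hN n hn
  have hn0 : (0:ℝ) < n := by exact_mod_cast hn1
  set M := (n:ℝ) ^ a with hMdef
  have hM0 : 0 < M := Real.rpow_pos_of_pos hn0 a
  have hMset : MeasurableSet {x : ℝ | |x| ≤ M} := measurableSet_le measurable_abs measurable_const
  set φ : ℝ → ℝ := fun x => if |x| ≤ M then x else 0 with hφ
  have hφmeas : Measurable φ := Measurable.ite hMset measurable_id measurable_const
  set T : ℕ → Ω → ℝ := fun i ω => φ (W i ω) with hT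
  have hTmeas : ∀ i, Measurable (T i) := fun i => hφmeas.comp (hWmeas i)
  have hTbd : ∀ i ω, |T i ω| ≤ M := by
    intro i ω
    simp only [hT, hφ]
    split_ifs with h
    · exact h
    · simpa using hM0.le
  have hTident : ∀ i, IdentDistrib (T i) (T 0) P P := fun i => (hWident i).comp hφmeas
  have hTint : Integrable (T 0) P := by
    refine Integrable.mono' (integrable_const M) ((hTmeas 0).aestronglyMeasurable)
      (ae_of_all _ fun ω => ?_)
    rw [Real.norm_eq_abs]; exact hTbd 0 ω
  have hT2bd : ∀ ω, (T 0 ω) ^ 2 ≤ (W 0 ω) ^ 2 := by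
    intro ω
    simp only [hT, hφ]
    split_ifs with h
    · exact le_refl _
    · simpa using sq_nonneg (W 0 ω)
  have hT2int : Integrable (fun ω => (T 0 ω) ^ 2) P := by
    refine Integrable.mono' (integrable_const (M ^ 2)) (((hTmeas 0).pow_const 2).aestronglyMeasurable)
      (ae_of_all _ fun ω => ?_)
    rw [Real.norm_eq_abs, abs_of_nonneg (sq_nonneg _), ← sq_abs]
    exact pow_le_pow_left₀ (abs_nonneg _) (hTbd 0 ω) 2
  set c := ∫ ω, T 0 ω ∂P with hcdef
  have hcM : |c| ≤ M := by
    calc |c| ≤ ∫ ω, |T 0 ω| ∂P := by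
          simpa [Real.norm_eq_abs] using norm_integral_le_integral_norm (μ := P) (T 0)
      _ ≤ ∫ (_ : Ω), M ∂P := integral_mono hTint.abs (integrable_const M) (fun ω => hTbd 0 ω)
      _ = M := by simp
  have hWTdiff : ∀ ω, |W 0 ω - T 0 ω| ≤ M ^ (1 - 2 * lam) * |W 0 ω| ^ (2 * lam) := by
    intro ω
    simp only [hT, hφ]
    split_ifs with h
    · simp only [sub_self, abs_zero]
      positivity
    · push_neg at h
      rw [sub_zero]
      set x := |W 0 ω| with hx
      have hxpos : 0 < x := lt_trans hM0 h
      have h1 : M ^ (2 * lam - 1) ≤ x ^ (2 * lam - 1) :=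
        Real.rpow_le_rpow hM0.le h.le (by linarith)
      have hxexp : x ^ (2 * lam) = x * x ^ (2 * lam - 1) := by
        rw [← Real.rpow_one_add' hxpos.le (by intro hc0; linarith : 1 + (2*lam-1) ≠ 0)]
        norm_num
      rw [show (1 - 2 * lam) = -(2 * lam - 1) by ring, Real.rpow_neg hM0.le,
        ← div_eq_inv_mul, le_div_iff₀ (Real.rpow_pos_of_pos hM0 _), hxexp]
      exact mul_le_mul_of_nonneg_left h1 hxpos.le
  have hWT_int : Integrable (fun ω => W 0 ω - T 0 ω) P := hWint.sub hTint
  have hcsmall : |c| ≤ δ / 2 := by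
    have hceq : c = -∫ ω, (W 0 ω - T 0 ω) ∂P := by
      rw [integral_sub hWint hTint, hEW]; ring
    have h1 : |∫ ω, (W 0 ω - T 0 ω) ∂P| ≤ ∫ ω, |W 0 ω - T 0 ω| ∂P := by
      simpa [Real.norm_eq_abs] using
        norm_integral_le_integral_norm (μ := P) (fun ω => W 0 ω - T 0 ω)
    have h2 : ∫ ω, |W 0 ω - T 0 ω| ∂P ≤ ∫ ω, M ^ (1 - 2 * lam) * |W 0 ω| ^ (2 * lam) ∂P :=
      integral_mono hWT_int.abs (hWmom.const_mul _) hWTdiff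
    have h3 : ∫ ω, M ^ (1 - 2 * lam) * |W 0 ω| ^ (2 * lam) ∂P = A * M ^ (1 - 2 * lam) := by
      rw [integral_const_mul, ← hA]; ring
    rw [hceq, abs_neg]
    calc |∫ ω, (W 0 ω - T 0 ω) ∂P| ≤ A * M ^ (1 - 2 * lam) := by linarith
      _ ≤ δ / 2 := hc2
  set U : ℕ → Ω → ℝ := fun i ω => T i ω - c with hU
  have hUmeas : ∀ i, Measurable (U i) := fun i => (hTmeas i).sub measurable_const
  have hUident : ∀ i, IdentDistrib (U i) (U 0) P P := fun i =>
    (hTident i).comp (measurable_id.sub measurable_const)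
  have hUindep : iIndepFun U P := by
    have h := hindep.comp (fun _ x => φ (x - m) - c)
      (fun _ => (hφmeas.comp (measurable_id.sub measurable_const)).sub measurable_const)
    exact h
  have hUbd : ∀ i ω, |U i ω| ≤ 2 * M := by
    intro i ω
    calc |U i ω| ≤ |T i ω| + |c| := abs_sub (T i ω) c
      _ ≤ M + M := add_le_add (hTbd i ω) hcM
      _ = 2 * M := by ring
  have hUint : Integrable (U 0) P := hTint.sub (integrable_const c)
  have hEU : ∫ ω, U 0 ω ∂P = 0 := by
    simp only [hU]
    rw [integral_sub hTint (integrable_const c), integral_const]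
    simp [hcdef]
  have hU2int : Integrable (fun ω => (U 0 ω) ^ 2) P := by
    refine Integrable.mono' (integrable_const ((2*M) ^ 2)) (((hUmeas 0).pow_const 2).aestronglyMeasurable)
      (ae_of_all _ fun ω => ?_)
    rw [Real.norm_eq_abs, abs_of_nonneg (sq_nonneg _), ← sq_abs]
    exact pow_le_pow_left₀ (abs_nonneg _) (hUbd 0 ω) 2
  have hEU2 : ∫ ω, (U 0 ω) ^ 2 ∂P ≤ σ2 := by
    have hexp : ∀ ω, (U 0 ω) ^ 2 = (T 0 ω) ^ 2 - 2 * c * T 0 ω + c ^ 2 := by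
      intro ω; simp only [hU]; ring
    have hmul_int : Integrable (fun ω => 2 * c * T 0 ω) P := hTint.const_mul (2 * c)
    have hsub_int : Integrable (fun ω => (T 0 ω) ^ 2 - 2 * c * T 0 ω) P := hT2int.sub hmul_int
    have hstep : ∫ ω, (U 0 ω) ^ 2 ∂P = (∫ ω, (T 0 ω) ^ 2 ∂P) - c ^ 2 := by
      have hrw : ∫ ω, (U 0 ω) ^ 2 ∂P
          = ∫ ω, ((T 0 ω) ^ 2 - 2 * c * T 0 ω + c ^ 2) ∂P := by
        exact integral_congr_ae (ae_of_all _ hexp)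
      rw [hrw, integral_add hsub_int (integrable_const _),
        integral_sub hT2int hmul_int, integral_const_mul, integral_const]
      simp [← hcdef]
      ring
    have hT2le : ∫ ω, (T 0 ω) ^ 2 ∂P ≤ σ2 := integral_mono hT2int hWsq hT2bd
    nlinarith [sq_nonneg c]
  set t := 1 / (2 * M) with htdef
  have ht0 : 0 < t := by positivity
  have htU : ∀ i ω, |t * U i ω| ≤ 1 := by
    intro i ω
    rw [abs_mul, abs_of_pos ht0]
    calc t * |U i ω| ≤ t * (2 * M) := by
          exact mul_le_mul_of_nonneg_left (hUbd i ω) ht0.le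
      _ = 1 := by
          rw [htdef]; field_simp
  have hmgf_int : ∀ i, Integrable (fun ω => Real.exp (t * U i ω)) P := by
    intro i
    refine Integrable.mono' (integrable_const (Real.exp 1))
      (((hUmeas i).const_mul t).exp.aestronglyMeasurable) (ae_of_all _ fun ω => ?_)
    rw [Real.norm_eq_abs, abs_of_pos (Real.exp_pos _)]
    exact Real.exp_le_exp.2 ((le_abs_self _).trans (htU i ω))
  have hmgf_le : mgf (U 0) P t ≤ Real.exp (t ^ 2 * σ2) := by
    have hptw : ∀ ω, Real.exp (t * U 0 ω) ≤ 1 + t * U 0 ω + t ^ 2 * (U 0 ω) ^ 2 := by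
      intro ω
      calc Real.exp (t * U 0 ω) ≤ 1 + t * U 0 ω + (t * U 0 ω) ^ 2 := exp_le_quad (htU 0 ω)
        _ = 1 + t * U 0 ω + t ^ 2 * (U 0 ω) ^ 2 := by ring
    have hrhs_int : Integrable (fun ω => 1 + t * U 0 ω + t ^ 2 * (U 0 ω) ^ 2) P :=
      ((integrable_const (1:ℝ)).add (hUint.const_mul t)).add (hU2int.const_mul (t ^ 2))
    have h1 : mgf (U 0) P t ≤ ∫ ω, (1 + t * U 0 ω + t ^ 2 * (U 0 ω) ^ 2) ∂P :=
      integral_mono (hmgf_int 0) hrhs_int hptw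
    have hint1 : Integrable (fun ω => t * U 0 ω) P := hUint.const_mul t
    have hint2 : Integrable (fun ω => t ^ 2 * (U 0 ω) ^ 2) P := hU2int.const_mul (t ^ 2)
    have hint3 : Integrable (fun ω => 1 + t * U 0 ω) P := (integrable_const (1:ℝ)).add hint1
    have h2 : ∫ ω, (1 + t * U 0 ω + t ^ 2 * (U 0 ω) ^ 2) ∂P
        = 1 + t * (∫ ω, U 0 ω ∂P) + t ^ 2 * ∫ ω, (U 0 ω) ^ 2 ∂P := by
      rw [integral_add hint3 hint2, integral_add (integrable_const (1:ℝ)) hint1,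
        integral_const_mul, integral_const_mul, integral_const]
      simp
    have h3 : 1 + t ^ 2 * ∫ ω, (U 0 ω) ^ 2 ∂P ≤ 1 + t ^ 2 * σ2 := by nlinarith [sq_nonneg t]
    have h4 : 1 + t ^ 2 * σ2 ≤ Real.exp (t ^ 2 * σ2) := by
      linarith [Real.add_one_le_exp (t ^ 2 * σ2)]
    rw [h2, hEU] at h1
    simp only [mul_zero, add_zero] at h1
    linarith
  set SU : Ω → ℝ := ∑ i ∈ Finset.range n, U i with hSU
  have hSUint : Integrable (fun ω => Real.exp (t * SU ω)) P :=
    hUindep.integrable_exp_mul_sum hUmeas (fun i _ => hmgf_int i)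
  have hcher := measure_ge_le_exp_mul_mgf (μ := P) (X := SU) ((n:ℝ) * δ / 2) ht0.le hSUint
  have hmgfsum : mgf SU P t = (mgf (U 0) P t) ^ n := by
    rw [hSU, hUindep.mgf_sum hUmeas]
    rw [Finset.prod_congr rfl (fun i _ => show mgf (U i) P t = mgf (U 0) P t from
      ((hUident i).comp (Real.measurable_exp.comp (measurable_id.const_mul t))).integral_eq)]
    rw [Finset.prod_const, Finset.card_range]
  have hexpcalc : Real.exp (-t * ((n:ℝ) * δ / 2)) * mgf SU P t
      ≤ Real.exp (-(δ / 8) * (n:ℝ) ^ b) := by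
    have h1 : mgf SU P t ≤ Real.exp (t ^ 2 * σ2) ^ n := by
      rw [hmgfsum]
      exact pow_le_pow_left₀ mgf_nonneg hmgf_le n
    have h2 : Real.exp (t ^ 2 * σ2) ^ n = Real.exp ((n:ℝ) * (t ^ 2 * σ2)) :=
      (Real.exp_nat_mul _ n).symm
    have hnb : (n:ℝ) / M = (n:ℝ) ^ b := by
      rw [hb_def, hMdef, Real.rpow_sub hn0, Real.rpow_one]
    have hexple : -t * ((n:ℝ) * δ / 2) + (n:ℝ) * (t ^ 2 * σ2) ≤ -(δ / 8) * (n:ℝ) ^ b := by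
      rw [← hnb, htdef]
      have hM2 : (0:ℝ) < M ^ 2 := by positivity
      have key : (n:ℝ) * σ2 / (4 * M ^ 2) ≤ (n:ℝ) * δ / (8 * M) := by
        rw [div_le_div_iff₀ (by positivity) (by positivity)]
        nlinarith [mul_le_mul_of_nonneg_right hc1 (show (0:ℝ) ≤ (n:ℝ) * M by positivity)]
      have e1 : -(1 / (2 * M)) * ((n:ℝ) * δ / 2) = -((n:ℝ) * δ / (4 * M)) := by
        ring
      have e2 : (n:ℝ) * ((1 / (2 * M)) ^ 2 * σ2) = (n:ℝ) * σ2 / (4 * M ^ 2) := by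
        ring
      rw [e1, e2]
      have e3 : -(δ / 8) * ((n:ℝ) / M) = -((n:ℝ) * δ / (8 * M)) := by
        ring
      rw [e3]
      have hdd : (n:ℝ) * δ / (4 * M) = 2 * ((n:ℝ) * δ / (8 * M)) := by ring
      have : (n:ℝ) * δ / (8 * M) ≤ (n:ℝ) * δ / (4 * M) := by
        rw [div_le_div_iff₀ (by positivity) (by positivity)]
        nlinarith [mul_nonneg (mul_nonneg hn0.le hδ.le) hM0.le]
      linarith
    calc Real.exp (-t * ((n:ℝ) * δ / 2)) * mgf SU P t
        ≤ Real.exp (-t * ((n:ℝ) * δ / 2)) * Real.exp ((n:ℝ) * (t ^ 2 * σ2)) := by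
          rw [← h2]
          exact mul_le_mul_of_nonneg_left h1 (Real.exp_pos _).le
      _ = Real.exp (-t * ((n:ℝ) * δ / 2) + (n:ℝ) * (t ^ 2 * σ2)) := (Real.exp_add _ _).symm
      _ ≤ Real.exp (-(δ / 8) * (n:ℝ) ^ b) := Real.exp_le_exp.2 hexple
  have hPE2 : P {ω | (n:ℝ) * δ / 2 ≤ SU ω} ≤ ENNReal.ofReal ((n:ℝ) ^ (-lam)) := by
    rw [← ENNReal.ofReal_toReal (measure_ne_top P {ω | (n:ℝ) * δ / 2 ≤ SU ω})]
    exact ENNReal.ofReal_le_ofReal ((hcher.trans hexpcalc).trans hc3)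
  have hincl : {ω | (n:ℝ) * δ ≤ (∑ i ∈ Finset.range n, Z i ω) - n * m}
      ⊆ (⋃ i ∈ Finset.range n, {ω | M < |W i ω|}) ∪ {ω | (n:ℝ) * δ / 2 ≤ SU ω} := by
    intro ω hω
    simp only [Set.mem_setOf_eq] at hω
    by_cases hcase : ∀ i ∈ Finset.range n, |W i ω| ≤ M
    · right
      have hTW : ∀ i ∈ Finset.range n, U i ω = W i ω - c := by
        intro i hi
        simp only [hU, hT, hφ]
        rw [if_pos (hcase i hi)]
      have hSW : (∑ i ∈ Finset.range n, W i ω) = (∑ i ∈ Finset.range n, Z i ω) - n * m := by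
        simp only [hW, Finset.sum_sub_distrib, Finset.sum_const, Finset.card_range,
          nsmul_eq_mul]
      have hSUω : SU ω = (∑ i ∈ Finset.range n, W i ω) - n * c := by
        simp only [hSU, Finset.sum_apply]
        rw [Finset.sum_congr rfl hTW, Finset.sum_sub_distrib, Finset.sum_const,
          Finset.card_range, nsmul_eq_mul]
      have hnc : (n:ℝ) * c ≤ (n:ℝ) * (δ / 2) :=
        mul_le_mul_of_nonneg_left ((le_abs_self c).trans hcsmall) hn0.le
      simp only [Set.mem_setOf_eq]
      rw [hSUω, hSW]
      linarith
    · left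
      push_neg at hcase
      obtain ⟨i, hi, hMi⟩ := hcase
      exact Set.mem_biUnion hi hMi
  have hmarkov : ∀ i : ℕ, P {ω | M < |W i ω|} ≤ ENNReal.ofReal (A / M ^ (2 * lam)) := by
    intro i
    have hid : P {ω | M < |W i ω|} = P {ω | M < |W 0 ω|} := by
      have h := (hWident i).measure_mem_eq (s := {x : ℝ | M < |x|})
        (measurableSet_lt measurable_const measurable_abs)
      simpa [Set.preimage_setOf_eq] using h
    rw [hid]
    exact markov_abs (hWmeas 0) hq0 hWmom hM0
  have hM2lam : M ^ (2 * lam) = (n:ℝ) ^ (1 + lam) := by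
    rw [hMdef, ← Real.rpow_mul hn0.le]
    rw [show a * (2 * lam) = 1 + lam by linarith [h2alam]]
  have harith : (n:ℝ) * (A / M ^ (2 * lam)) = A * (n:ℝ) ^ (-lam) := by
    rw [hM2lam, Real.rpow_add hn0, Real.rpow_one, Real.rpow_neg hn0.le]
    have hpow : (0:ℝ) < (n:ℝ) ^ lam := Real.rpow_pos_of_pos hn0 _
    field_simp
  calc P {ω | (n:ℝ) * δ ≤ (∑ i ∈ Finset.range n, Z i ω) - n * m}
      ≤ P ((⋃ i ∈ Finset.range n, {ω | M < |W i ω|}) ∪ {ω | (n:ℝ) * δ / 2 ≤ SU ω}) :=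
        measure_mono hincl
    _ ≤ P (⋃ i ∈ Finset.range n, {ω | M < |W i ω|}) + P {ω | (n:ℝ) * δ / 2 ≤ SU ω} :=
        measure_union_le _ _
    _ ≤ (∑ i ∈ Finset.range n, P {ω | M < |W i ω|}) + ENNReal.ofReal ((n:ℝ) ^ (-lam)) :=
        add_le_add (measure_biUnion_finset_le _ _) hPE2
    _ ≤ (∑ _i ∈ Finset.range n, ENNReal.ofReal (A / M ^ (2 * lam)))
        + ENNReal.ofReal ((n:ℝ) ^ (-lam)) := by
        gcongr with i hi
        exact hmarkov i
    _ = (n : ℝ≥0∞) * ENNReal.ofReal (A / M ^ (2 * lam)) + ENNReal.ofReal ((n:ℝ) ^ (-lam)) := by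
        rw [Finset.sum_const, Finset.card_range, nsmul_eq_mul]
    _ = ENNReal.ofReal ((n:ℝ) * (A / M ^ (2 * lam))) + ENNReal.ofReal ((n:ℝ) ^ (-lam)) := by
        rw [← ENNReal.ofReal_natCast n, ← ENNReal.ofReal_mul (by positivity)]
    _ = ENNReal.ofReal (A * (n:ℝ) ^ (-lam) + (n:ℝ) ^ (-lam)) := by
        rw [harith, ← ENNReal.ofReal_add (by positivity) (by positivity)]
    _ = ENNReal.ofReal ((A + 1) * (n:ℝ) ^ (-lam)) := by ring_nf


lemma onedim_upper (Z : ℕ → Ω → ℝ) (hmeas : ∀ i, Measurable (Z i))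
    (hindep : iIndepFun Z P)
    (hident : ∀ i, IdentDistrib (Z i) (Z 0) P P)
    (lam : ℝ) (hlam : 1 ≤ lam)
    (hmom : Integrable (fun ω => |Z 0 ω| ^ (2 * lam)) P)
    (δ : ℝ) (hδ : 0 < δ) :
    ∃ C : ℝ, 0 ≤ C ∧ ∀ n : ℕ, 1 ≤ n →
      P {ω | (n:ℝ) * δ ≤ (∑ i ∈ Finset.range n, Z i ω) - n * (∫ ω, Z 0 ω ∂P)}
        ≤ ENNReal.ofReal (C * (n:ℝ) ^ (-lam)) := by
  have hq2 : (2:ℝ) ≤ 2 * lam := by linarith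
  have hZint : Integrable (Z 0) P := by
    refine Integrable.mono' (g := fun ω => 1 + |Z 0 ω| ^ (2 * lam))
      ((integrable_const 1).add hmom) (hmeas 0).aestronglyMeasurable
      (ae_of_all _ fun ω => ?_)
    rw [Real.norm_eq_abs]
    have := abs_rpow_le_one_add (x := Z 0 ω) (p := 1) (q := 2 * lam) zero_le_one (by linarith)
    rwa [Real.rpow_one] at this
  rcases eq_or_lt_of_le hlam with heq | hlt
  · subst heq
    have hZsq : Integrable (fun ω => (Z 0 ω) ^ 2) P := by
      have h := integrable_abs_rpow_of_le (P := P) (hmeas 0) (by norm_num : (0:ℝ) ≤ 2)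
        (by linarith) hmom
      refine h.congr (ae_of_all _ fun ω => ?_)
      simp only
      rw [show ((2:ℝ)) = ((2:ℕ) : ℝ) by norm_num, Real.rpow_natCast, sq_abs]
    exact cheb_case Z hmeas hindep hident hZint hZsq δ hδ
  · have h := chernoff_case Z hmeas hindep hident lam hlt hmom hZint δ hδ
    obtain ⟨N, C, hC0, hC⟩ := h
    exact patch P (fun n => {ω | (n:ℝ) * δ ≤ (∑ i ∈ Finset.range n, Z i ω)
      - n * (∫ ω, Z 0 ω ∂P)}) lam (by linarith) ⟨N, C, hC0, hC⟩

lemma onedim_abs (Z : ℕ → Ω → ℝ) (hmeas : ∀ i, Measurable (Z i))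
    (hindep : iIndepFun Z P)
    (hident : ∀ i, IdentDistrib (Z i) (Z 0) P P)
    (lam : ℝ) (hlam : 1 ≤ lam)
    (hmom : Integrable (fun ω => |Z 0 ω| ^ (2 * lam)) P)
    (δ : ℝ) (hδ : 0 < δ) :
    ∃ C : ℝ, 0 ≤ C ∧ ∀ n : ℕ, 1 ≤ n →
      P {ω | (n:ℝ) * δ ≤ |(∑ i ∈ Finset.range n, Z i ω) - n * (∫ ω, Z 0 ω ∂P)|}
        ≤ ENNReal.ofReal (C * (n:ℝ) ^ (-lam)) := by
  obtain ⟨C1, hC10, hC1⟩ := onedim_upper Z hmeas hindep hident lam hlam hmom δ hδ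
  set Zn : ℕ → Ω → ℝ := fun i ω => -(Z i ω) with hZn
  have hmeasn : ∀ i, Measurable (Zn i) := fun i => (hmeas i).neg
  have hindepn : iIndepFun Zn P :=
    hindep.comp (fun _ => Neg.neg) (fun _ => measurable_neg)
  have hidentn : ∀ i, IdentDistrib (Zn i) (Zn 0) P P := fun i =>
    (hident i).comp measurable_neg
  have hmomn : Integrable (fun ω => |Zn 0 ω| ^ (2 * lam)) P := by
    simpa [hZn] using hmom
  obtain ⟨C2, hC20, hC2⟩ := onedim_upper Zn hmeasn hindepn hidentn lam hlam hmomn δ hδ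
  have hmean : ∫ ω, Zn 0 ω ∂P = -∫ ω, Z 0 ω ∂P := by
    simp [hZn, integral_neg]
  refine ⟨C1 + C2, by linarith, fun n hn => ?_⟩
  have hincl : {ω | (n:ℝ) * δ ≤ |(∑ i ∈ Finset.range n, Z i ω) - n * (∫ ω, Z 0 ω ∂P)|}
      ⊆ {ω | (n:ℝ) * δ ≤ (∑ i ∈ Finset.range n, Z i ω) - n * (∫ ω, Z 0 ω ∂P)}
        ∪ {ω | (n:ℝ) * δ ≤ (∑ i ∈ Finset.range n, Zn i ω) - n * (∫ ω, Zn 0 ω ∂P)} := by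
    intro ω hω
    simp only [Set.mem_setOf_eq] at hω
    rcases abs_cases ((∑ i ∈ Finset.range n, Z i ω) - n * (∫ ω, Z 0 ω ∂P))
      with ⟨habs, _⟩ | ⟨habs, _⟩
    · left; simp only [Set.mem_setOf_eq]; linarith
    · right
      simp only [Set.mem_setOf_eq, hmean, hZn, Finset.sum_neg_distrib, integral_neg]
      linarith
  calc P {ω | (n:ℝ) * δ ≤ |(∑ i ∈ Finset.range n, Z i ω) - n * (∫ ω, Z 0 ω ∂P)|}
      ≤ P {ω | (n:ℝ) * δ ≤ (∑ i ∈ Finset.range n, Z i ω) - n * (∫ ω, Z 0 ω ∂P)}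
        + P {ω | (n:ℝ) * δ ≤ (∑ i ∈ Finset.range n, Zn i ω) - n * (∫ ω, Zn 0 ω ∂P)} :=
        (measure_mono hincl).trans (measure_union_le _ _)
    _ ≤ ENNReal.ofReal (C1 * (n:ℝ) ^ (-lam)) + ENNReal.ofReal (C2 * (n:ℝ) ^ (-lam)) :=
        add_le_add (hC1 n hn) (hC2 n hn)
    _ = ENNReal.ofReal ((C1 + C2) * (n:ℝ) ^ (-lam)) := by
        rw [← ENNReal.ofReal_add (by positivity) (by positivity)]
        ring_nf

end Helpers


/-- Let `X, X₁, X₂, …` be i.i.d. random vectors in `ℝ^d` with mean `μ = E[X]`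
and `E[‖X‖^{2λ}] < ∞` for some real `λ ≥ 1`.  Then for every fixed `ε > 0`,
`P(‖X̄ₙ − μ‖ > ε) = O(n^{-λ})` as `n → ∞`, where `X̄ₙ = n⁻¹ ∑_{i=1}^n Xᵢ`. -/
theorem stmt_2 {Ω : Type*} [MeasurableSpace Ω] (P : Measure Ω) [IsProbabilityMeasure P]
    (d : ℕ) (X : ℕ → Ω → EuclideanSpace ℝ (Fin d))
    (hmeas : ∀ i, Measurable (X i))
    (hindep : iIndepFun X P)
    (hident : ∀ i, IdentDistrib (X i) (X 0) P P)
    (lam : ℝ) (hlam : 1 ≤ lam)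
    (hmom : Integrable (fun ω => ‖X 0 ω‖ ^ (2 * lam)) P)
    (μ : EuclideanSpace ℝ (Fin d)) (hμ : μ = ∫ ω, X 0 ω ∂P)
    (ε : ℝ) (hε : 0 < ε) :
    ∃ C : ℝ, ∀ n : ℕ, 1 ≤ n →
      P {ω | ε < ‖(n : ℝ)⁻¹ • (∑ i ∈ Finset.range n, X i ω) - μ‖}
        ≤ ENNReal.ofReal (C * (n : ℝ) ^ (-lam)) := by

  have hq0 : (0:ℝ) ≤ 2 * lam := by linarith
  rcases Nat.eq_zero_or_pos d with hd | hd
  · subst hd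
    refine ⟨1, fun n hn => ?_⟩
    have hempty : {ω | ε < ‖(n : ℝ)⁻¹ • (∑ i ∈ Finset.range n, X i ω) - μ‖} = ∅ := by
      ext ω
      simp only [Set.mem_setOf_eq, Set.mem_empty_iff_false, iff_false, not_lt]
      have h0 : ‖(n : ℝ)⁻¹ • (∑ i ∈ Finset.range n, X i ω) - μ‖ = 0 := by
        rw [EuclideanSpace.norm_eq]
        simp
      rw [h0]; exact hε.le
    rw [hempty]
    simp only [measure_empty]
    positivity
  have hd0 : (0:ℝ) < Real.sqrt d := Real.sqrt_pos.2 (by exact_mod_cast hd)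
  set δ := ε / Real.sqrt d with hδdef
  have hδ : 0 < δ := by positivity
  have hXint : Integrable (X 0) P := by
    refine Integrable.mono' (g := fun ω => 1 + ‖X 0 ω‖ ^ (2 * lam))
      ((integrable_const 1).add hmom) (hmeas 0).aestronglyMeasurable (ae_of_all _ fun ω => ?_)
    have h := abs_rpow_le_one_add (x := ‖X 0 ω‖) (p := 1) (q := 2 * lam) zero_le_one
      (by linarith)
    rwa [abs_of_nonneg (norm_nonneg _), Real.rpow_one] at h
  have hcoordmeas : ∀ j : Fin d, Measurable (fun v : EuclideanSpace ℝ (Fin d) => v j) :=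
    fun j => (EuclideanSpace.proj (𝕜 := ℝ) j).continuous.measurable
  have hcoord_le : ∀ (v : EuclideanSpace ℝ (Fin d)) (j : Fin d), |v j| ≤ ‖v‖ := by
    intro v j
    rw [EuclideanSpace.norm_eq]
    have h1 : (v j) ^ 2 ≤ ∑ i, ‖v i‖ ^ 2 := by
      have := Finset.single_le_sum (f := fun i : Fin d => ‖v i‖ ^ 2)
        (fun i _ => sq_nonneg _) (Finset.mem_univ j)
      simpa [Real.norm_eq_abs, sq_abs] using this
    calc |v j| = Real.sqrt ((v j) ^ 2) := (Real.sqrt_sq_eq_abs _).symm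
      _ ≤ Real.sqrt (∑ i, ‖v i‖ ^ 2) := Real.sqrt_le_sqrt h1
  have hj : ∀ j : Fin d, ∃ C : ℝ, 0 ≤ C ∧ ∀ n : ℕ, 1 ≤ n →
      P {ω | (n:ℝ) * δ ≤ |(∑ i ∈ Finset.range n, X i ω j) - n * (∫ ω, X 0 ω j ∂P)|}
        ≤ ENNReal.ofReal (C * (n:ℝ) ^ (-lam)) := by
    intro j
    have hmomj : Integrable (fun ω => |X 0 ω j| ^ (2 * lam)) P := by
      refine Integrable.mono' hmom
        (((Real.continuous_rpow_const hq0).measurable.comp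
          (((hcoordmeas j).comp (hmeas 0)).abs)).aestronglyMeasurable)
        (ae_of_all _ fun ω => ?_)
      rw [Real.norm_eq_abs, abs_of_nonneg (Real.rpow_nonneg (abs_nonneg _) _)]
      exact Real.rpow_le_rpow (abs_nonneg _) (hcoord_le (X 0 ω) j) hq0
    exact onedim_abs (fun i ω => X i ω j)
      (fun i => (hcoordmeas j).comp (hmeas i))
      (hindep.comp (fun _ v => v j) (fun _ => hcoordmeas j))
      (fun i => (hident i).comp (hcoordmeas j)) lam hlam hmomj δ hδ
  choose C hC0 hC using hj
  refine ⟨∑ j : Fin d, C j, fun n hn => ?_⟩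
  have hn0 : (0:ℝ) < n := by exact_mod_cast hn
  have hμj : ∀ j : Fin d, μ j = ∫ ω, X 0 ω j ∂P := fun j => by
    rw [hμ]
    exact ((EuclideanSpace.proj (𝕜 := ℝ) j).integral_comp_comm hXint).symm
  have hincl : {ω | ε < ‖(n : ℝ)⁻¹ • (∑ i ∈ Finset.range n, X i ω) - μ‖}
      ⊆ ⋃ j : Fin d, {ω | (n:ℝ) * δ ≤
          |(∑ i ∈ Finset.range n, X i ω j) - n * (∫ ω, X 0 ω j ∂P)|} := by
    intro ω hω
    simp only [Set.mem_setOf_eq] at hω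
    set v := (n : ℝ)⁻¹ • (∑ i ∈ Finset.range n, X i ω) - μ with hv
    have hex : ∃ j, δ < |v j| := by
      by_contra hcon
      push_neg at hcon
      have hnorm : ‖v‖ ≤ Real.sqrt d * δ := by
        rw [EuclideanSpace.norm_eq]
        have hsum : ∑ i, ‖v i‖ ^ 2 ≤ (d:ℝ) * δ ^ 2 := by
          calc ∑ i, ‖v i‖ ^ 2 ≤ ∑ _i : Fin d, δ ^ 2 := by
                refine Finset.sum_le_sum fun i _ => ?_
                rw [Real.norm_eq_abs]
                exact pow_le_pow_left₀ (abs_nonneg _) (hcon i) 2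
            _ = (d:ℝ) * δ ^ 2 := by simp [mul_comm]
        calc Real.sqrt (∑ i, ‖v i‖ ^ 2) ≤ Real.sqrt ((d:ℝ) * δ ^ 2) := Real.sqrt_le_sqrt hsum
          _ = Real.sqrt d * δ := by
              rw [Real.sqrt_mul (by positivity), Real.sqrt_sq hδ.le]
      have heq : Real.sqrt d * δ = ε := by
        rw [hδdef]; field_simp
      rw [heq] at hnorm
      exact absurd hω (not_lt.2 hnorm)
    obtain ⟨j, hj'⟩ := hex
    refine Set.mem_iUnion.2 ⟨j, ?_⟩
    simp only [Set.mem_setOf_eq]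
    have hsap : (∑ i ∈ Finset.range n, X i ω) j = ∑ i ∈ Finset.range n, X i ω j :=
      map_sum (EuclideanSpace.proj (𝕜 := ℝ) j) (fun i => X i ω) (Finset.range n)
    have hvj : v j = (n:ℝ)⁻¹ * (∑ i ∈ Finset.range n, X i ω j) - μ j := by
      rw [hv]
      simp only [PiLp.sub_apply, PiLp.smul_apply, smul_eq_mul, hsap]
    have h2 : (n:ℝ) * v j = (∑ i ∈ Finset.range n, X i ω j) - n * μ j := by
      rw [hvj]
      field_simp
    have h3 : (n:ℝ) * δ ≤ |(n:ℝ) * v j| := by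
      rw [abs_mul, abs_of_pos hn0]
      exact mul_le_mul_of_nonneg_left hj'.le hn0.le
    rw [h2, hμj j] at h3
    exact h3
  calc P {ω | ε < ‖(n : ℝ)⁻¹ • (∑ i ∈ Finset.range n, X i ω) - μ‖}
      ≤ ∑' j : Fin d, P {ω | (n:ℝ) * δ ≤
          |(∑ i ∈ Finset.range n, X i ω j) - n * (∫ ω, X 0 ω j ∂P)|} :=
        (measure_mono hincl).trans (measure_iUnion_le _)
    _ = ∑ j : Fin d, P {ω | (n:ℝ) * δ ≤
          |(∑ i ∈ Finset.range n, X i ω j) - n * (∫ ω, X 0 ω j ∂P)|} := tsum_fintype _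
    _ ≤ ∑ j : Fin d, ENNReal.ofReal (C j * (n:ℝ) ^ (-lam)) :=
        Finset.sum_le_sum fun j _ => hC j n hn
    _ = ENNReal.ofReal (∑ j : Fin d, C j * (n:ℝ) ^ (-lam)) :=
        (ENNReal.ofReal_sum_of_nonneg fun j _ =>
          mul_nonneg (hC0 j) (Real.rpow_nonneg hn0.le _)).symm
    _ = ENNReal.ofReal ((∑ j : Fin d, C j) * (n:ℝ) ^ (-lam)) := by
        rw [← Finset.sum_mul]
end

section
/- Let X, X_1, X_2, … be i.i.d. random vectors in ℝ^d, let X̄_n = n^{-1} Σ_{i=1}^n X_i, let V̂_n = n^{-1} Σ_{i=1}^n (X_i − X̄_n)(X_i − X̄_n)ᵀ be the sample covariance matrix, and let V_0 = Cov(X) be the population covariance matrix. Let λ > 1 and suppose E[‖X‖^{4λ}] < ∞. If C_3 > 1 is such that λ_max(V_0) ≤ C_3/2 and λ_min(V_0) ≥ 2/C_3, then P( λ_max(V̂_n) > C_3 or λ_min(V̂_n) < C_3^{-1} ) = O(n^{-λ}) as n → ∞. -/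
open MeasureTheory ProbabilityTheory Matrix BigOperators Finset

/-- The smallest eigenvalue of a symmetric real matrix, characterized as the
infimum of the Rayleigh quotient over unit vectors (Courant–Fischer). -/
noncomputable def lambdaMin {d : ℕ} (A : Matrix (Fin d) (Fin d) ℝ) : ℝ :=
  sInf {r : ℝ | ∃ u : Fin d → ℝ, (∑ i, u i ^ 2) = 1 ∧ r = u ⬝ᵥ (A *ᵥ u)}

/-- The largest eigenvalue of a symmetric real matrix, characterized as the
supremum of the Rayleigh quotient over unit vectors (Courant–Fischer). -/
noncomputable def lambdaMax {d : ℕ} (A : Matrix (Fin d) (Fin d) ℝ) : ℝ :=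
  sSup {r : ℝ | ∃ u : Fin d → ℝ, (∑ i, u i ^ 2) = 1 ∧ r = u ⬝ᵥ (A *ᵥ u)}

/-- The sample covariance matrix `V̂ₙ = n⁻¹ ∑_{i=1}^n (Xᵢ − X̄ₙ)(Xᵢ − X̄ₙ)ᵀ`
of the sample `X₁(ω), …, Xₙ(ω)`, where `X̄ₙ = n⁻¹ ∑_{i=1}^n Xᵢ`. -/
noncomputable def sampleCov {Ω : Type*} {d : ℕ} (X : ℕ → Ω → (Fin d → ℝ))
    (n : ℕ) (ω : Ω) : Matrix (Fin d) (Fin d) ℝ :=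
  (n : ℝ)⁻¹ • ∑ i ∈ Finset.range n,
    vecMulVec (X i ω - (n : ℝ)⁻¹ • ∑ j ∈ Finset.range n, X j ω)
              (X i ω - (n : ℝ)⁻¹ • ∑ j ∈ Finset.range n, X j ω)


lemma exp_le_quadratic_of_abs_le {y : ℝ} (h : |y| ≤ 1) : Real.exp y ≤ 1 + y + y ^ 2 := by
  have hb := Real.exp_bound h (n := 3) (by norm_num)
  have h2 : |y| ^ 3 ≤ y ^ 2 := by
    calc |y| ^ 3 = |y| * |y|^2 := by ring
    _ ≤ 1 * |y|^2 := by gcongr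
    _ = y ^ 2 := by rw [one_mul, sq_abs]
  have hs : ∑ m ∈ Finset.range 3, y ^ m / m.factorial = 1 + y + y^2/2 := by
    rw [Finset.sum_range_succ, Finset.sum_range_succ, Finset.sum_range_succ,
      Finset.sum_range_zero]
    norm_num [Nat.factorial]
  rw [hs] at hb
  have hc : ((3:ℕ).succ : ℝ) / ((3:ℕ).factorial * (3:ℕ)) = 2/9 := by
    norm_num [Nat.factorial]
  rw [hc] at hb
  have h3 := (abs_sub_le_iff.1 hb).1
  nlinarith [sq_nonneg y]

lemma exp_le_quadratic_of_nonpos {y : ℝ} (h : y ≤ 0) : Real.exp y ≤ 1 + y + y ^ 2 := by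
  rcases le_total (-1) y with h1 | h1
  · exact exp_le_quadratic_of_abs_le (abs_le.2 ⟨h1, by linarith⟩)
  · have : Real.exp y ≤ 1 := Real.exp_le_one_iff.2 h
    nlinarith

lemma exp_le_quadratic {y b : ℝ} (hy : y ≤ b) (hb : 0 ≤ b) :
    Real.exp y ≤ 1 + y + y ^ 2 * Real.exp b := by
  have hb1 : (1:ℝ) ≤ Real.exp b := Real.one_le_exp hb
  rcases le_total y 0 with h | h
  · have := exp_le_quadratic_of_nonpos h
    nlinarith [sq_nonneg y]
  rcases le_total y 1 with h1 | h1
  · have := exp_le_quadratic_of_abs_le (abs_le.2 ⟨by linarith, h1⟩)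
    nlinarith [sq_nonneg y]
  · have h1sq : 1 ≤ y ^ 2 := by nlinarith
    have h2 : Real.exp y ≤ y ^ 2 * Real.exp b := by
      have he : Real.exp y ≤ Real.exp b := Real.exp_le_exp.2 hy
      nlinarith [Real.exp_pos y]
    nlinarith


namespace Stmt6

def RS {d : ℕ} (M : Matrix (Fin d) (Fin d) ℝ) : Set ℝ :=
  {r : ℝ | ∃ u : Fin d → ℝ, (∑ i, u i ^ 2) = 1 ∧ r = u ⬝ᵥ (M *ᵥ u)}

lemma quad_abs_le {d : ℕ} {M : Matrix (Fin d) (Fin d) ℝ} {u : Fin d → ℝ} {δ : ℝ}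
    (hδ : 0 ≤ δ) (hu : (∑ i, u i ^ 2) = 1) (hM : ∀ i j, |M i j| ≤ δ) :
    |u ⬝ᵥ (M *ᵥ u)| ≤ d * δ := by
  have habs : ∀ i : Fin d, |u i| ^ 2 = u i ^ 2 := fun i => sq_abs _
  calc |u ⬝ᵥ (M *ᵥ u)| = |∑ i, ∑ j, u i * (M i j * u j)| := by
        simp [dotProduct, mulVec, Finset.mul_sum]
    _ ≤ ∑ i, |∑ j, u i * (M i j * u j)| := Finset.abs_sum_le_sum_abs _ _
    _ ≤ ∑ i, ∑ j, |u i| * (|M i j| * |u j|) := by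
        refine Finset.sum_le_sum fun i _ => ?_
        refine (Finset.abs_sum_le_sum_abs _ _).trans ?_
        refine Finset.sum_le_sum fun j _ => ?_
        rw [abs_mul, abs_mul]
    _ ≤ ∑ i, ∑ j, |u i| * (δ * |u j|) := by
        refine Finset.sum_le_sum fun i _ => Finset.sum_le_sum fun j _ => ?_
        exact mul_le_mul_of_nonneg_left
          (mul_le_mul_of_nonneg_right (hM i j) (abs_nonneg _)) (abs_nonneg _)
    _ = δ * ∑ i, ∑ j, |u i| * |u j| := by
        rw [Finset.mul_sum]
        refine Finset.sum_congr rfl fun i _ => ?_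
        rw [Finset.mul_sum]
        exact Finset.sum_congr rfl fun j _ => by ring
    _ = δ * (∑ i, |u i|) ^ 2 := by rw [sq, Finset.sum_mul_sum]
    _ ≤ δ * (d * ∑ i, |u i| ^ 2) := by
        refine mul_le_mul_of_nonneg_left ?_ hδ
        have := sq_sum_le_card_mul_sum_sq (s := (Finset.univ : Finset (Fin d)))
          (f := fun i => |u i|)
        simpa using this
    _ = d * δ := by
        simp only [habs, hu]
        ring

lemma rs_nonempty {d : ℕ} (hd : 0 < d) (M : Matrix (Fin d) (Fin d) ℝ) : (RS M).Nonempty := by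
  classical
  refine ⟨_, Pi.single ⟨0, hd⟩ 1, ?_, rfl⟩
  simp [Pi.single_apply]

lemma rs_abs_bound {d : ℕ} (hd : 0 < d) (M : Matrix (Fin d) (Fin d) ℝ) :
    ∀ r ∈ RS M, |r| ≤ d * (∑ i, ∑ j, |M i j|) := by
  rintro r ⟨u, hu, rfl⟩
  have hδ : 0 ≤ ∑ i, ∑ j, |M i j| :=
    Finset.sum_nonneg fun i _ => Finset.sum_nonneg fun j _ => abs_nonneg _
  refine quad_abs_le hδ hu fun i j => ?_
  calc |M i j| ≤ ∑ j', |M i j'| := Finset.single_le_sum (f := fun j' => |M i j'|)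
          (fun j' _ => abs_nonneg _) (mem_univ j)
    _ ≤ ∑ i', ∑ j', |M i' j'| :=
        Finset.single_le_sum (f := fun i' => ∑ j', |M i' j'|)
          (fun i' _ => Finset.sum_nonneg fun j' _ => abs_nonneg _) (mem_univ i)

lemma rs_bddAbove {d : ℕ} (hd : 0 < d) (M : Matrix (Fin d) (Fin d) ℝ) : BddAbove (RS M) :=
  ⟨d * (∑ i, ∑ j, |M i j|), fun r hr => (abs_le.1 (rs_abs_bound hd M r hr)).2⟩

lemma rs_bddBelow {d : ℕ} (hd : 0 < d) (M : Matrix (Fin d) (Fin d) ℝ) : BddBelow (RS M) :=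
  ⟨-(d * (∑ i, ∑ j, |M i j|)), fun r hr => (abs_le.1 (rs_abs_bound hd M r hr)).1⟩

lemma lambda_entrywise {d : ℕ} (hd : 0 < d) (A B : Matrix (Fin d) (Fin d) ℝ) {δ : ℝ}
    (hδ : 0 ≤ δ) (h : ∀ i j, |A i j - B i j| ≤ δ) :
    lambdaMax A ≤ lambdaMax B + d * δ ∧ lambdaMin B - d * δ ≤ lambdaMin A := by
  have key : ∀ u : Fin d → ℝ, (∑ i, u i ^ 2) = 1 →
      |u ⬝ᵥ (A *ᵥ u) - u ⬝ᵥ (B *ᵥ u)| ≤ d * δ := by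
    intro u hu
    have : u ⬝ᵥ (A *ᵥ u) - u ⬝ᵥ (B *ᵥ u) = u ⬝ᵥ ((A - B) *ᵥ u) := by
      rw [Matrix.sub_mulVec, dotProduct_sub]
    rw [this]
    exact quad_abs_le hδ hu fun i j => by simpa using h i j
  constructor
  · refine csSup_le (rs_nonempty hd A) ?_
    rintro r ⟨u, hu, rfl⟩
    have h1 : u ⬝ᵥ (B *ᵥ u) ≤ lambdaMax B := le_csSup (rs_bddAbove hd B) ⟨u, hu, rfl⟩
    have h2 := (abs_le.1 (key u hu)).2
    linarith
  · refine le_csInf (rs_nonempty hd A) ?_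
    rintro r ⟨u, hu, rfl⟩
    have h1 : lambdaMin B ≤ u ⬝ᵥ (B *ᵥ u) := csInf_le (rs_bddBelow hd B) ⟨u, hu, rfl⟩
    have h2 := (abs_le.1 (key u hu)).1
    linarith

lemma lambdaMin_zero_dim (M : Matrix (Fin 0) (Fin 0) ℝ) : lambdaMin M = 0 := by
  have : {r : ℝ | ∃ u : Fin 0 → ℝ, (∑ i, u i ^ 2) = 1 ∧ r = u ⬝ᵥ (M *ᵥ u)} = ∅ := by
    ext r
    simp
  rw [lambdaMin, this, Real.sInf_empty]


lemma sum_centered_prod {n : ℕ} (hn : 1 ≤ n) (x y : ℕ → ℝ) :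
    (n : ℝ)⁻¹ * (∑ k ∈ Finset.range n,
        (x k - (n : ℝ)⁻¹ * ∑ l ∈ Finset.range n, x l)
        * (y k - (n : ℝ)⁻¹ * ∑ l ∈ Finset.range n, y l))
    = (n : ℝ)⁻¹ * (∑ k ∈ Finset.range n, x k * y k)
      - ((n : ℝ)⁻¹ * ∑ k ∈ Finset.range n, x k)
        * ((n : ℝ)⁻¹ * ∑ k ∈ Finset.range n, y k) := by
  have hn0 : (n:ℝ) ≠ 0 := by
    have : (0:ℝ) < n := by exact_mod_cast hn
    exact this.ne'
  set sx := ∑ l ∈ Finset.range n, x l with hsx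
  set sy := ∑ l ∈ Finset.range n, y l with hsy
  have expand : ∑ k ∈ Finset.range n,
      (x k - (n : ℝ)⁻¹ * sx) * (y k - (n : ℝ)⁻¹ * sy)
      = (∑ k ∈ Finset.range n, x k * y k) - ((n:ℝ)⁻¹ * sy) * sx
        - ((n:ℝ)⁻¹ * sx) * sy + n * (((n:ℝ)⁻¹ * sx) * ((n:ℝ)⁻¹ * sy)) := by
    rw [Finset.sum_congr rfl (fun k _ => by ring :
      ∀ k ∈ Finset.range n, (x k - (n : ℝ)⁻¹ * sx) * (y k - (n : ℝ)⁻¹ * sy)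
        = x k * y k - ((n:ℝ)⁻¹ * sy) * x k - ((n:ℝ)⁻¹ * sx) * y k
          + ((n:ℝ)⁻¹ * sx) * ((n:ℝ)⁻¹ * sy))]
    rw [Finset.sum_add_distrib, Finset.sum_sub_distrib, Finset.sum_sub_distrib,
      ← Finset.mul_sum, ← Finset.mul_sum, Finset.sum_const, Finset.card_range,
      nsmul_eq_mul, ← hsx, ← hsy]
  rw [expand]
  field_simp
  ring

lemma sampleCov_apply {Ω : Type*} {d : ℕ} (X : ℕ → Ω → (Fin d → ℝ)) {n : ℕ}
    (hn : 1 ≤ n) (ω : Ω) (i j : Fin d) :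
    sampleCov X n ω i j
      = (n : ℝ)⁻¹ * (∑ k ∈ Finset.range n, X k ω i * X k ω j)
        - ((n : ℝ)⁻¹ * ∑ k ∈ Finset.range n, X k ω i)
          * ((n : ℝ)⁻¹ * ∑ k ∈ Finset.range n, X k ω j) := by
  have h1 : sampleCov X n ω i j
      = (n : ℝ)⁻¹ * (∑ k ∈ Finset.range n,
          (X k ω i - (n : ℝ)⁻¹ * ∑ l ∈ Finset.range n, X l ω i)
          * (X k ω j - (n : ℝ)⁻¹ * ∑ l ∈ Finset.range n, X l ω j)) := by
    rw [sampleCov]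
    rw [Matrix.smul_apply, Matrix.sum_apply]
    rw [smul_eq_mul]
    congr 1
    refine Finset.sum_congr rfl fun k _ => ?_
    rw [Matrix.vecMulVec_apply]
    congr 1
    · simp [Finset.sum_apply]
    · simp [Finset.sum_apply]
  rw [h1, sum_centered_prod hn]

lemma aux_sq_pow_bound {x s lam : ℝ} (hlam : 1 ≤ lam) (hs : 0 ≤ s) (h : x ^ 2 ≤ s) :
    |x| ^ (2 * lam) ≤ 1 + s ^ (2 * lam) := by
  have hlam0 : 0 ≤ lam := by linarith
  have e : |x| ^ (2 * lam) = (x ^ 2) ^ lam := by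
    rw [show (2 * lam) = (2:ℝ) * lam by ring, Real.rpow_mul (abs_nonneg x)]
    congr 1
    rw [show ((2:ℝ) : ℝ) = ((2:ℕ) : ℝ) by norm_num, Real.rpow_natCast, sq_abs]
  rw [e]
  have h1 : (x ^ 2) ^ lam ≤ s ^ lam := Real.rpow_le_rpow (sq_nonneg x) h hlam0
  have h2 : s ^ lam ≤ 1 + s ^ (2 * lam) := by
    rcases le_total s 1 with hs1 | hs1
    · have : s ^ lam ≤ 1 := Real.rpow_le_one hs hs1 hlam0
      have : (0:ℝ) ≤ s ^ (2*lam) := Real.rpow_nonneg hs _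
      linarith [Real.rpow_le_one hs hs1 hlam0]
    · have : s ^ lam ≤ s ^ (2 * lam) :=
        Real.rpow_le_rpow_of_exponent_le hs1 (by linarith)
      linarith
  linarith



variable {Ω : Type*} [MeasurableSpace Ω] {P : Measure Ω} [IsProbabilityMeasure P]

lemma meas_le_ofReal {S : Set Ω} {r : ℝ} (h : (P S).toReal ≤ r) :
    P S ≤ ENNReal.ofReal r := by
  rw [← ENNReal.ofReal_toReal (measure_ne_top P S)]
  exact ENNReal.ofReal_le_ofReal h

lemma rpow_helper_le {x q : ℝ} (hq : 2 ≤ q) : |x| ≤ 1 + |x| ^ q := by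
  rcases le_total (|x|) 1 with h | h
  · have : (0:ℝ) ≤ |x| ^ q := Real.rpow_nonneg (abs_nonneg x) q
    linarith
  · have h2 : |x| ≤ |x| ^ q := by
      calc |x| = |x| ^ (1:ℝ) := (Real.rpow_one _).symm
        _ ≤ |x| ^ q := Real.rpow_le_rpow_of_exponent_le h (by linarith)
    linarith

lemma rpow_helper_sq_le {x q : ℝ} (hq : 2 ≤ q) : x ^ 2 ≤ 1 + |x| ^ q := by
  rcases le_total (|x|) 1 with h | h
  · have h1 : x ^ 2 ≤ 1 := by
      rw [← sq_abs]
      nlinarith [abs_nonneg x]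
    have : (0:ℝ) ≤ |x| ^ q := Real.rpow_nonneg (abs_nonneg x) q
    linarith
  · have h1 : x ^ 2 = |x| ^ ((2:ℕ):ℝ) := by
      rw [Real.rpow_natCast, sq_abs]
    have h2 : |x| ^ ((2:ℕ):ℝ) ≤ |x| ^ q := by
      refine Real.rpow_le_rpow_of_exponent_le h (by norm_num [hq])
    rw [h1]
    linarith

lemma integrable_of_abs_rpow {Z : Ω → ℝ} (hZ : Measurable Z) {q : ℝ} (hq : 2 ≤ q)
    (h : Integrable (fun ω => |Z ω| ^ q) P) :
    Integrable Z P ∧ Integrable (fun ω => Z ω ^ 2) P := by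
  have hint : Integrable (fun ω => 1 + |Z ω| ^ q) P := (integrable_const 1).add h
  constructor
  · refine hint.mono' hZ.aestronglyMeasurable (Filter.Eventually.of_forall fun ω => ?_)
    simpa [Real.norm_eq_abs] using rpow_helper_le (x := Z ω) hq
  · refine hint.mono' (hZ.pow_const 2).aestronglyMeasurable
      (Filter.Eventually.of_forall fun ω => ?_)
    rw [Real.norm_eq_abs, abs_of_nonneg (sq_nonneg _)]
    exact rpow_helper_sq_le hq

lemma markov_rpow {Z : Ω → ℝ} (hZ : Measurable Z) {q a : ℝ} (hq : 0 < q) (ha : 0 < a)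
    (h : Integrable (fun ω => |Z ω| ^ q) P) :
    P {ω | a < Z ω} ≤ ENNReal.ofReal ((∫ ω, |Z ω| ^ q ∂P) / a ^ q) := by
  have hsub : {ω | a < Z ω} ⊆ {ω | a ^ q ≤ |Z ω| ^ q} := by
    intro ω hω
    exact Real.rpow_le_rpow ha.le (le_trans (le_of_lt hω) (le_abs_self _)) hq.le
  have hmono := measure_mono (μ := P) hsub
  have hmar := mul_meas_ge_le_integral_of_nonneg (μ := P)
    (f := fun ω => |Z ω| ^ q)
    (Filter.Eventually.of_forall fun ω => Real.rpow_nonneg (abs_nonneg _) q) h (a ^ q)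
  have hapos : 0 < a ^ q := Real.rpow_pos_of_pos ha q
  refine le_trans hmono (meas_le_ofReal ?_)
  rw [le_div_iff₀ hapos]
  have hmar' : a ^ q * (P {ω | a ^ q ≤ |Z ω| ^ q}).toReal ≤ ∫ ω, |Z ω| ^ q ∂P := hmar
  linarith [hmar']

lemma identDistrib_meas_lt {f g : Ω → ℝ} (h : IdentDistrib f g P P) (a : ℝ) :
    P {ω | a < f ω} = P {ω | a < g ω} :=
  h.measure_mem_eq measurableSet_Ioi

lemma sq_min_le {y a : ℝ} (ha : 0 ≤ a) : (min y a) ^ 2 ≤ y ^ 2 := by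
  rcases le_total y a with h | h
  · rw [min_eq_left h]
  · rw [min_eq_right h]
    nlinarith

lemma mgf_min_le {Y0 : Ω → ℝ} (hY : Measurable Y0) (intY : Integrable Y0 P)
    (intY2 : Integrable (fun ω => Y0 ω ^ 2) P) {a h : ℝ} (ha : 0 ≤ a) (hh : 0 ≤ h) :
    mgf (fun ω => min (Y0 ω) a) P h ≤
      Real.exp (h * (∫ ω, Y0 ω ∂P) + h ^ 2 * (∫ ω, Y0 ω ^ 2 ∂P) * Real.exp (h * a)) := by
  set c : ℝ := h ^ 2 * Real.exp (h * a) with hc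
  have hc0 : 0 ≤ c := mul_nonneg (sq_nonneg _) (Real.exp_pos _).le
  set T : Ω → ℝ := fun ω => min (Y0 ω) a with hT
  have hTm : Measurable T := hY.min measurable_const
  have intT : Integrable T P := by
    refine (intY.abs.add (integrable_const |a|)).mono' hTm.aestronglyMeasurable
      (Filter.Eventually.of_forall fun ω => ?_)
    simp only [Real.norm_eq_abs, Pi.add_apply]
    rcases le_total (Y0 ω) a with h' | h'
    · rw [hT]
      simp only [min_eq_left h']
      linarith [abs_nonneg a]
    · rw [hT]
      simp only [min_eq_right h']
      linarith [abs_nonneg (Y0 ω), le_abs_self a]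
  have intT2 : Integrable (fun ω => T ω ^ 2) P := by
    refine intY2.mono' (hTm.pow_const 2).aestronglyMeasurable
      (Filter.Eventually.of_forall fun ω => ?_)
    rw [Real.norm_eq_abs, abs_of_nonneg (sq_nonneg _)]
    exact sq_min_le ha
  have hTle : ∀ ω, h * T ω ≤ h * a := fun ω =>
    mul_le_mul_of_nonneg_left (min_le_right _ _) hh
  have intexp : Integrable (fun ω => Real.exp (h * T ω)) P := by
    refine (integrable_const (Real.exp (h * a))).mono'
      ((hTm.const_mul h).exp).aestronglyMeasurable
      (Filter.Eventually.of_forall fun ω => ?_)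
    rw [Real.norm_eq_abs, abs_of_nonneg (Real.exp_pos _).le]
    exact Real.exp_le_exp.2 (hTle ω)
  have intRHS : Integrable (fun ω => 1 + h * T ω + c * T ω ^ 2) P :=
    ((integrable_const (1:ℝ)).add (intT.const_mul h)).add (intT2.const_mul c)
  have step1 : mgf T P h ≤ ∫ ω, (1 + h * T ω + c * T ω ^ 2) ∂P := by
    refine integral_mono intexp intRHS fun ω => ?_
    calc Real.exp (h * T ω) ≤ 1 + h * T ω + (h * T ω) ^ 2 * Real.exp (h * a) :=
          exp_le_quadratic (hTle ω) (mul_nonneg hh ha)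
      _ = 1 + h * T ω + c * T ω ^ 2 := by rw [hc]; ring
  have step2 : ∫ ω, (1 + h * T ω + c * T ω ^ 2) ∂P
      = 1 + h * (∫ ω, T ω ∂P) + c * (∫ ω, T ω ^ 2 ∂P) := by
    have e1 : ∫ ω, (1 + h * T ω + c * T ω ^ 2) ∂P
        = ∫ ω, (1 + h * T ω) ∂P + ∫ ω, c * T ω ^ 2 ∂P :=
      integral_add ((integrable_const (1:ℝ)).add (intT.const_mul h)) (intT2.const_mul c)
    have e2 : ∫ ω, (1 + h * T ω) ∂P = ∫ ω, (1:ℝ) ∂P + ∫ ω, h * T ω ∂P :=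
      integral_add (integrable_const (1:ℝ)) (intT.const_mul h)
    rw [e1, e2, MeasureTheory.integral_const_mul, MeasureTheory.integral_const_mul, MeasureTheory.integral_const]
    simp
  have hTint_le : ∫ ω, T ω ∂P ≤ ∫ ω, Y0 ω ∂P :=
    integral_mono intT intY fun ω => min_le_left _ _
  have hTint2_le : ∫ ω, T ω ^ 2 ∂P ≤ ∫ ω, Y0 ω ^ 2 ∂P :=
    integral_mono intT2 intY2 fun ω => sq_min_le ha
  have step3 : mgf T P h ≤ 1 + (h * (∫ ω, Y0 ω ∂P) + c * (∫ ω, Y0 ω ^ 2 ∂P)) := by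
    rw [step2] at step1
    have h1 : h * (∫ ω, T ω ∂P) ≤ h * (∫ ω, Y0 ω ∂P) :=
      mul_le_mul_of_nonneg_left hTint_le hh
    have h2 : c * (∫ ω, T ω ^ 2 ∂P) ≤ c * (∫ ω, Y0 ω ^ 2 ∂P) :=
      mul_le_mul_of_nonneg_left hTint2_le hc0
    linarith
  calc mgf T P h ≤ 1 + (h * (∫ ω, Y0 ω ∂P) + c * (∫ ω, Y0 ω ^ 2 ∂P)) := step3
    _ ≤ Real.exp (h * (∫ ω, Y0 ω ∂P) + c * (∫ ω, Y0 ω ^ 2 ∂P)) := by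
        linarith [Real.add_one_le_exp (h * (∫ ω, Y0 ω ∂P) + c * (∫ ω, Y0 ω ^ 2 ∂P))]
    _ = Real.exp (h * (∫ ω, Y0 ω ∂P) + h ^ 2 * (∫ ω, Y0 ω ^ 2 ∂P) * Real.exp (h * a)) := by
        rw [hc]; ring_nf

lemma tail_one_sided (Y : ℕ → Ω → ℝ) (hYm : ∀ i, Measurable (Y i))
    (hind : iIndepFun Y P)
    (hid : ∀ i, IdentDistrib (Y i) (Y 0) P P)
    (lam : ℝ) (hlam : 1 ≤ lam)
    (hmom : Integrable (fun ω => |Y 0 ω| ^ (2 * lam)) P)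
    (ε : ℝ) (hε : 0 < ε) :
    ∃ D, 0 ≤ D ∧ ∀ n : ℕ, 1 ≤ n →
      P {ω | ε ≤ (n : ℝ)⁻¹ * (∑ k ∈ Finset.range n, Y k ω) - ∫ ω, Y 0 ω ∂P}
        ≤ ENNReal.ofReal (D * (n : ℝ) ^ (-lam)) := by
  have hlam0 : 0 < lam := lt_of_lt_of_le one_pos hlam
  have h2lam : (2:ℝ) ≤ 2 * lam := by linarith
  obtain ⟨intY, intY2⟩ := integrable_of_abs_rpow (hYm 0) h2lam hmom
  set m : ℝ := ∫ ω, Y 0 ω ∂P with hm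
  set K1 : ℝ := ∫ ω, |Y 0 ω| ^ (2 * lam) ∂P with hK1
  set K2 : ℝ := ∫ ω, Y 0 ω ^ 2 ∂P with hK2
  have hK1_0 : 0 ≤ K1 :=
    integral_nonneg fun ω => Real.rpow_nonneg (abs_nonneg _) _
  have hK2_0 : 0 ≤ K2 := integral_nonneg fun ω => sq_nonneg _
  set cc : ℝ := ε / (4 * lam) with hcc
  have hcc0 : 0 < cc := div_pos hε (by linarith)
  -- eventual smallness of the mgf error term
  have htend : Filter.Tendsto
      (fun n : ℕ => (2 * lam / ε) * K2 * (Real.log n / (n:ℝ) ^ (2⁻¹:ℝ)))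
      Filter.atTop (nhds 0) := by
    have t1 : Filter.Tendsto (fun x : ℝ => Real.log x / x ^ (2⁻¹:ℝ))
        Filter.atTop (nhds 0) :=
      (isLittleO_log_rpow_atTop (by norm_num)).tendsto_div_nhds_zero
    have t2 : Filter.Tendsto (fun n : ℕ => Real.log n / (n:ℝ) ^ (2⁻¹:ℝ))
        Filter.atTop (nhds 0) := t1.comp tendsto_natCast_atTop_atTop
    simpa using t2.const_mul ((2 * lam / ε) * K2)
  have hev : ∀ᶠ n : ℕ in Filter.atTop,
      (2 * lam / ε) * K2 * (Real.log n / (n:ℝ) ^ (2⁻¹:ℝ)) < ε / 2 :=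
    htend.eventually (gt_mem_nhds (half_pos hε))
  obtain ⟨N0, hN0⟩ := Filter.eventually_atTop.1 hev
  set N : ℕ := max N0 1 with hN
  have hN1 : 1 ≤ N := le_max_right _ _
  set D : ℝ := K1 / cc ^ (2 * lam) + 1 + (N : ℝ) ^ lam with hD
  have hccp : 0 < cc ^ (2 * lam) := Real.rpow_pos_of_pos hcc0 _
  have hD0 : 0 ≤ D := by
    have h1 : 0 ≤ K1 / cc ^ (2 * lam) := div_nonneg hK1_0 hccp.le
    have hNp : 0 < (N:ℝ) ^ lam := Real.rpow_pos_of_pos (by exact_mod_cast hN1) _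
    rw [hD]
    linarith
  refine ⟨D, hD0, fun n hn => ?_⟩
  have hn0 : (0:ℝ) < n := by exact_mod_cast hn
  have hn1 : (1:ℝ) ≤ n := by exact_mod_cast hn
  rcases lt_or_ge n N with hnN | hnN
  · -- small n : use P ≤ 1
    have h1 : P {ω | ε ≤ (n : ℝ)⁻¹ * (∑ k ∈ Finset.range n, Y k ω) - m} ≤ 1 :=
      prob_le_one
    refine h1.trans ?_
    rw [← ENNReal.ofReal_one]
    refine ENNReal.ofReal_le_ofReal ?_
    have hnl : (n:ℝ) ^ lam ≤ (N:ℝ) ^ lam :=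
      Real.rpow_le_rpow hn0.le (by exact_mod_cast hnN.le) hlam0.le
    have hprod : (n:ℝ) ^ lam * (n:ℝ) ^ (-lam) = 1 := by
      rw [← Real.rpow_add hn0]
      simp
    have hnegp : 0 < (n:ℝ) ^ (-lam) := Real.rpow_pos_of_pos hn0 _
    have hDlarge : (n:ℝ) ^ lam ≤ D := by
      have : 0 ≤ K1 / cc ^ (2 * lam) := div_nonneg hK1_0 hccp.le
      rw [hD]; linarith
    calc (1:ℝ) = (n:ℝ) ^ lam * (n:ℝ) ^ (-lam) := hprod.symm
      _ ≤ D * (n:ℝ) ^ (-lam) := mul_le_mul_of_nonneg_right hDlarge hnegp.le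
  · -- main branch : N ≤ n
    set a : ℝ := cc * n with ha_def
    have ha : 0 < a := mul_pos hcc0 hn0
    set h : ℝ := (2 * lam / ε) * Real.log n / n with hh_def
    have hlog0 : 0 ≤ Real.log n := Real.log_nonneg hn1
    have hh : 0 ≤ h := by
      apply div_nonneg _ hn0.le
      exact mul_nonneg (div_nonneg (by linarith) hε.le) hlog0
    have hha : h * a = Real.log n / 2 := by
      rw [hh_def, ha_def, hcc]
      field_simp
      ring
    set T : ℕ → Ω → ℝ := fun k ω => min (Y k ω) a with hT
    have hTm : ∀ k, Measurable (T k) := fun k => (hYm k).min measurable_const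
    have hTind : iIndepFun T P := by
      have := hind.comp (g := fun _ : ℕ => fun x : ℝ => min x a)
        (fun _ => measurable_id.min measurable_const)
      exact this
    -- event inclusion
    have hincl : {ω | ε ≤ (n : ℝ)⁻¹ * (∑ k ∈ Finset.range n, Y k ω) - m} ⊆
        (⋃ k ∈ Finset.range n, {ω | a < Y k ω}) ∪
          {ω | (n:ℝ) * (m + ε) ≤ (∑ k ∈ Finset.range n, T k) ω} := by
      intro ω hω
      by_cases hc : ∀ k ∈ Finset.range n, Y k ω ≤ a
      · right
        have hsum : (∑ k ∈ Finset.range n, T k) ω = ∑ k ∈ Finset.range n, Y k ω := by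
          rw [Finset.sum_apply]
          exact Finset.sum_congr rfl fun k hk => min_eq_left (hc k hk)
        rw [Set.mem_setOf_eq, hsum]
        have hω' : ε ≤ (n : ℝ)⁻¹ * (∑ k ∈ Finset.range n, Y k ω) - m := hω
        have hmul := mul_le_mul_of_nonneg_left hω' hn0.le
        have hinv : (n:ℝ) * ((n : ℝ)⁻¹ * (∑ k ∈ Finset.range n, Y k ω)) =
            ∑ k ∈ Finset.range n, Y k ω := by
          field_simp
        nlinarith [hmul, hinv]
      · left
        push_neg at hc
        obtain ⟨k, hk1, hk2⟩ := hc
        exact Set.mem_biUnion hk1 hk2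
    -- Chernoff part
    have hSm : Measurable (∑ k ∈ Finset.range n, T k) := by
      have he : (∑ k ∈ Finset.range n, T k) = fun ω => ∑ k ∈ Finset.range n, T k ω := by
        funext ω
        exact Finset.sum_apply _ _ _
      rw [he]
      exact Finset.measurable_sum _ fun k _ => hTm k
    have hexpS : Integrable (fun ω => Real.exp (h * (∑ k ∈ Finset.range n, T k) ω)) P := by
      refine (integrable_const (Real.exp (h * (n * a)))).mono'
        ((hSm.const_mul h).exp).aestronglyMeasurable
        (Filter.Eventually.of_forall fun ω => ?_)
      rw [Real.norm_eq_abs, abs_of_nonneg (Real.exp_pos _).le]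
      apply Real.exp_le_exp.2
      apply mul_le_mul_of_nonneg_left _ hh
      rw [Finset.sum_apply]
      calc ∑ k ∈ Finset.range n, T k ω ≤ ∑ k ∈ Finset.range n, a :=
            Finset.sum_le_sum fun k _ => min_le_right _ _
        _ = n * a := by rw [Finset.sum_const, Finset.card_range, nsmul_eq_mul]
    have chern := measure_ge_le_exp_mul_mgf (μ := P)
      (X := ∑ k ∈ Finset.range n, T k) ((n:ℝ) * (m + ε)) hh hexpS
    have hmgfsum : mgf (∑ k ∈ Finset.range n, T k) P h
        = ∏ k ∈ Finset.range n, mgf (T k) P h := hTind.mgf_sum hTm _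
    have hmgfk : ∀ k, mgf (T k) P h
        ≤ Real.exp (h * m + h ^ 2 * K2 * Real.exp (h * a)) := by
      intro k
      have hcomp : IdentDistrib (T k) (T 0) P P :=
        (hid k).comp (measurable_id.min measurable_const)
      have hmgf_eq : mgf (T k) P h = mgf (T 0) P h := by
        unfold mgf
        exact (hcomp.comp ((measurable_id.const_mul h).exp)).integral_eq
      rw [hmgf_eq]
      exact mgf_min_le (hYm 0) intY intY2 ha.le hh
    have hprodle : ∏ k ∈ Finset.range n, mgf (T k) P h
        ≤ Real.exp ((n:ℝ) * (h * m + h ^ 2 * K2 * Real.exp (h * a))) := by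
      calc ∏ k ∈ Finset.range n, mgf (T k) P h
          ≤ ∏ k ∈ Finset.range n, Real.exp (h * m + h ^ 2 * K2 * Real.exp (h * a)) :=
            Finset.prod_le_prod (fun k _ => mgf_nonneg) (fun k _ => hmgfk k)
        _ = Real.exp (h * m + h ^ 2 * K2 * Real.exp (h * a)) ^ n := by
            rw [Finset.prod_const, Finset.card_range]
        _ = Real.exp ((n:ℝ) * (h * m + h ^ 2 * K2 * Real.exp (h * a))) := by
            rw [← Real.exp_nat_mul]
    -- numeric condition
    have hsqrt : (n:ℝ) ^ (2⁻¹:ℝ) * (n:ℝ) ^ (2⁻¹:ℝ) = n := by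
      rw [← Real.rpow_add hn0]
      norm_num
    have hEexp : Real.exp (h * a) = (n:ℝ) ^ (2⁻¹:ℝ) := by
      rw [hha, Real.rpow_def_of_pos hn0]
      ring_nf
    have hcond : h * K2 * Real.exp (h * a) ≤ ε / 2 := by
      have := hN0 n (le_trans (le_max_left _ _) hnN)
      rw [hEexp, hh_def]
      calc (2 * lam / ε) * Real.log n / n * K2 * (n:ℝ) ^ (2⁻¹:ℝ)
          = (2 * lam / ε) * K2 * (Real.log n / (n:ℝ) ^ (2⁻¹:ℝ)) := by
            have hs0 : (0:ℝ) < (n:ℝ) ^ (2⁻¹:ℝ) := Real.rpow_pos_of_pos hn0 _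
            generalize hgen : (n:ℝ) ^ (2⁻¹:ℝ) = s at hsqrt hs0 ⊢
            rw [← hsqrt]
            field_simp
        _ ≤ ε / 2 := this.le
    have hexp_bound : Real.exp (-h * ((n:ℝ) * (m + ε)))
        * Real.exp ((n:ℝ) * (h * m + h ^ 2 * K2 * Real.exp (h * a)))
        ≤ (n:ℝ) ^ (-lam) := by
      rw [← Real.exp_add]
      have harr : -h * ((n:ℝ) * (m + ε)) + (n:ℝ) * (h * m + h ^ 2 * K2 * Real.exp (h * a))
          = (n:ℝ) * h * (h * K2 * Real.exp (h * a)) - (n:ℝ) * h * ε := by ring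
      rw [harr]
      have hnh : 0 ≤ (n:ℝ) * h := mul_nonneg hn0.le hh
      have h1 : (n:ℝ) * h * (h * K2 * Real.exp (h * a)) - (n:ℝ) * h * ε
          ≤ (n:ℝ) * h * (ε/2) - (n:ℝ) * h * ε :=
        sub_le_sub_right (mul_le_mul_of_nonneg_left hcond hnh) _
      have h2 : (n:ℝ) * h * (ε/2) - (n:ℝ) * h * ε = -(lam * Real.log n) := by
        rw [hh_def]
        field_simp
        ring
      rw [Real.rpow_def_of_pos hn0]
      apply Real.exp_le_exp.2
      rw [h2] at h1
      calc (n:ℝ) * h * (h * K2 * Real.exp (h * a)) - (n:ℝ) * h * ε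
          ≤ -(lam * Real.log n) := h1
        _ = Real.log n * (-lam) := by ring
    have hchern2 : P {ω | (n:ℝ) * (m + ε) ≤ (∑ k ∈ Finset.range n, T k) ω}
        ≤ ENNReal.ofReal ((n:ℝ) ^ (-lam)) := by
      apply meas_le_ofReal
      refine chern.trans ?_
      rw [hmgfsum]
      calc Real.exp (-h * ((n:ℝ) * (m + ε))) * ∏ k ∈ Finset.range n, mgf (T k) P h
          ≤ Real.exp (-h * ((n:ℝ) * (m + ε)))
            * Real.exp ((n:ℝ) * (h * m + h ^ 2 * K2 * Real.exp (h * a))) :=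
            mul_le_mul_of_nonneg_left hprodle (Real.exp_pos _).le
        _ ≤ (n:ℝ) ^ (-lam) := hexp_bound
    -- Markov part
    have hmark : ∀ k, P {ω | a < Y k ω} ≤ ENNReal.ofReal (K1 / a ^ (2 * lam)) := by
      intro k
      rw [identDistrib_meas_lt (hid k) a]
      exact markov_rpow (hYm 0) (by linarith) ha hmom
    -- combine
    calc P {ω | ε ≤ (n : ℝ)⁻¹ * (∑ k ∈ Finset.range n, Y k ω) - m}
        ≤ P ((⋃ k ∈ Finset.range n, {ω | a < Y k ω}) ∪
            {ω | (n:ℝ) * (m + ε) ≤ (∑ k ∈ Finset.range n, T k) ω}) := measure_mono hincl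
      _ ≤ P (⋃ k ∈ Finset.range n, {ω | a < Y k ω})
          + P {ω | (n:ℝ) * (m + ε) ≤ (∑ k ∈ Finset.range n, T k) ω} := measure_union_le _ _
      _ ≤ (∑ k ∈ Finset.range n, P {ω | a < Y k ω})
          + ENNReal.ofReal ((n:ℝ) ^ (-lam)) :=
            add_le_add (measure_biUnion_finset_le _ _) hchern2
      _ ≤ (∑ k ∈ Finset.range n, ENNReal.ofReal (K1 / a ^ (2 * lam)))
          + ENNReal.ofReal ((n:ℝ) ^ (-lam)) := by
            exact add_le_add (Finset.sum_le_sum fun k _ => hmark k) le_rfl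
      _ = ENNReal.ofReal ((n:ℝ) * (K1 / a ^ (2 * lam)) + (n:ℝ) ^ (-lam)) := by
            have hapow : 0 < a ^ (2 * lam) := Real.rpow_pos_of_pos ha _
            have hx1 : 0 ≤ (n:ℝ) * (K1 / a ^ (2 * lam)) :=
              mul_nonneg hn0.le (div_nonneg hK1_0 hapow.le)
            have hx2 : 0 ≤ (n:ℝ) ^ (-lam) := (Real.rpow_pos_of_pos hn0 _).le
            rw [Finset.sum_const, Finset.card_range, nsmul_eq_mul]
            rw [← ENNReal.ofReal_natCast n, ← ENNReal.ofReal_mul (Nat.cast_nonneg n),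
              ← ENNReal.ofReal_add hx1 hx2]
      _ ≤ ENNReal.ofReal (D * (n:ℝ) ^ (-lam)) := by
            refine ENNReal.ofReal_le_ofReal ?_
            have key : (n:ℝ) * (K1 / a ^ (2 * lam))
                ≤ (K1 / cc ^ (2 * lam)) * (n:ℝ) ^ (-lam) := by
              rw [ha_def, Real.mul_rpow hcc0.le hn0.le]
              have hnp : 0 < (n:ℝ) ^ (2*lam) := Real.rpow_pos_of_pos hn0 _
              have e1 : (n:ℝ) * (K1 / (cc ^ (2*lam) * (n:ℝ) ^ (2*lam)))
                  = (K1 / cc ^ (2*lam)) * ((n:ℝ) * (n:ℝ) ^ (-(2*lam))) := by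
                rw [Real.rpow_neg hn0.le]
                field_simp
              rw [e1]
              have e2 : (n:ℝ) * (n:ℝ) ^ (-(2*lam)) = (n:ℝ) ^ (1 - 2*lam) := by
                nth_rewrite 1 [← Real.rpow_one (n:ℝ)]
                rw [← Real.rpow_add hn0]
                ring_nf
              rw [e2]
              apply mul_le_mul_of_nonneg_left _ (div_nonneg hK1_0 hccp.le)
              exact Real.rpow_le_rpow_of_exponent_le hn1 (by linarith)
            have hNl : 0 ≤ (N:ℝ) ^ lam := (Real.rpow_pos_of_pos (by exact_mod_cast hN1) _).le
            have hnlm : 0 ≤ (n:ℝ) ^ (-lam) := (Real.rpow_pos_of_pos hn0 _).le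
            have hq : 0 ≤ (N:ℝ) ^ lam * (n:ℝ) ^ (-lam) := mul_nonneg hNl hnlm
            rw [hD]
            have expand : (K1 / cc ^ (2 * lam) + 1 + (N:ℝ) ^ lam) * (n:ℝ) ^ (-lam)
                = (K1 / cc ^ (2 * lam)) * (n:ℝ) ^ (-lam) + (n:ℝ) ^ (-lam)
                  + (N:ℝ) ^ lam * (n:ℝ) ^ (-lam) := by ring
            rw [expand]
            linarith

lemma tail_two_sided (Y : ℕ → Ω → ℝ) (hYm : ∀ i, Measurable (Y i))
    (hind : iIndepFun Y P)
    (hid : ∀ i, IdentDistrib (Y i) (Y 0) P P)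
    (lam : ℝ) (hlam : 1 ≤ lam)
    (hmom : Integrable (fun ω => |Y 0 ω| ^ (2 * lam)) P)
    (ε : ℝ) (hε : 0 < ε) :
    ∃ D, 0 ≤ D ∧ ∀ n : ℕ, 1 ≤ n →
      P {ω | ε ≤ |(n : ℝ)⁻¹ * (∑ k ∈ Finset.range n, Y k ω) - ∫ ω, Y 0 ω ∂P|}
        ≤ ENNReal.ofReal (D * (n : ℝ) ^ (-lam)) := by
  obtain ⟨D1, hD1, h1⟩ := tail_one_sided Y hYm hind hid lam hlam hmom ε hε
  set Z : ℕ → Ω → ℝ := fun k ω => -(Y k ω) with hZ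
  have hZm : ∀ i, Measurable (Z i) := fun i => (hYm i).neg
  have hZind : iIndepFun Z P :=
    hind.comp (g := fun _ : ℕ => fun x : ℝ => -x) (fun _ => measurable_neg)
  have hZid : ∀ i, IdentDistrib (Z i) (Z 0) P P := fun i => (hid i).comp measurable_neg
  have hZmom : Integrable (fun ω => |Z 0 ω| ^ (2 * lam)) P := by
    have : (fun ω => |Z 0 ω| ^ (2 * lam)) = (fun ω => |Y 0 ω| ^ (2 * lam)) := by
      funext ω
      rw [hZ]
      simp
    rw [this]
    exact hmom
  obtain ⟨D2, hD2, h2⟩ := tail_one_sided Z hZm hZind hZid lam hlam hZmom ε hε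
  refine ⟨D1 + D2, by linarith, fun n hn => ?_⟩
  have hmz : ∫ ω, Z 0 ω ∂P = -∫ ω, Y 0 ω ∂P := by
    rw [hZ]
    exact integral_neg _
  have hincl : {ω | ε ≤ |(n : ℝ)⁻¹ * (∑ k ∈ Finset.range n, Y k ω) - ∫ ω, Y 0 ω ∂P|} ⊆
      {ω | ε ≤ (n : ℝ)⁻¹ * (∑ k ∈ Finset.range n, Y k ω) - ∫ ω, Y 0 ω ∂P} ∪
      {ω | ε ≤ (n : ℝ)⁻¹ * (∑ k ∈ Finset.range n, Z k ω) - ∫ ω, Z 0 ω ∂P} := by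
    intro ω hω
    have hω' : ε ≤ |(n : ℝ)⁻¹ * (∑ k ∈ Finset.range n, Y k ω) - ∫ ω, Y 0 ω ∂P| := hω
    have hsz : (n : ℝ)⁻¹ * (∑ k ∈ Finset.range n, Z k ω)
        = -((n : ℝ)⁻¹ * (∑ k ∈ Finset.range n, Y k ω)) := by
      rw [hZ]
      rw [Finset.sum_neg_distrib]
      ring
    rcases abs_cases ((n : ℝ)⁻¹ * (∑ k ∈ Finset.range n, Y k ω) - ∫ ω, Y 0 ω ∂P)
      with ⟨he, _⟩ | ⟨he, _⟩
    · left
      rw [Set.mem_setOf_eq]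
      rw [he] at hω'
      exact hω'
    · right
      rw [Set.mem_setOf_eq, hsz, hmz]
      rw [he] at hω'
      linarith
  calc P {ω | ε ≤ |(n : ℝ)⁻¹ * (∑ k ∈ Finset.range n, Y k ω) - ∫ ω, Y 0 ω ∂P|}
      ≤ P {ω | ε ≤ (n : ℝ)⁻¹ * (∑ k ∈ Finset.range n, Y k ω) - ∫ ω, Y 0 ω ∂P}
        + P {ω | ε ≤ (n : ℝ)⁻¹ * (∑ k ∈ Finset.range n, Z k ω) - ∫ ω, Z 0 ω ∂P} :=
        (measure_mono hincl).trans (measure_union_le _ _)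
    _ ≤ ENNReal.ofReal (D1 * (n : ℝ) ^ (-lam)) + ENNReal.ofReal (D2 * (n : ℝ) ^ (-lam)) :=
        add_le_add (h1 n hn) (h2 n hn)
    _ = ENNReal.ofReal ((D1 + D2) * (n : ℝ) ^ (-lam)) := by
        have hr : 0 ≤ (n : ℝ) ^ (-lam) := Real.rpow_nonneg (Nat.cast_nonneg n) _
        rw [← ENNReal.ofReal_add (mul_nonneg hD1 hr) (mul_nonneg hD2 hr)]
        ring_nf


end Stmt6

/-- Let `X, X₁, X₂, …` be i.i.d. random vectors in `ℝ^d` with `E[‖X‖^{4λ}] < ∞`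
(`λ > 1`), population covariance `V₀` and sample covariance `V̂ₙ`.  If
`C₃ > 1` satisfies `λ_max(V₀) ≤ C₃/2` and `λ_min(V₀) ≥ 2/C₃`, then
`P( λ_max(V̂ₙ) > C₃ or λ_min(V̂ₙ) < C₃⁻¹ ) = O(n^{-λ})` as `n → ∞`. -/
theorem stmt_6 {Ω : Type*} [MeasurableSpace Ω] (P : Measure Ω) [IsProbabilityMeasure P]
    (d : ℕ) (X : ℕ → Ω → (Fin d → ℝ))
    (hmeas : ∀ i, Measurable (X i))
    (hindep : iIndepFun X P)
    (hident : ∀ i, IdentDistrib (X i) (X 0) P P)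
    (lam : ℝ) (hlam : 1 < lam)
    (hmom : Integrable (fun ω => Real.sqrt (∑ i, X 0 ω i ^ 2) ^ (4 * lam)) P)
    (μ : Fin d → ℝ) (hμ : ∀ i, μ i = ∫ ω, X 0 ω i ∂P)
    (V0 : Matrix (Fin d) (Fin d) ℝ)
    (hV0 : ∀ i j, V0 i j = ∫ ω, (X 0 ω i - μ i) * (X 0 ω j - μ j) ∂P)
    (C3 : ℝ) (hC3 : 1 < C3)
    (hmax : lambdaMax V0 ≤ C3 / 2) (hmin : 2 / C3 ≤ lambdaMin V0) :
    ∃ D : ℝ, ∀ n : ℕ, 1 ≤ n →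
      P {ω | C3 < lambdaMax (sampleCov X n ω) ∨ lambdaMin (sampleCov X n ω) < C3⁻¹}
        ≤ ENNReal.ofReal (D * (n : ℝ) ^ (-lam)) := by
  classical
  have hC30 : (0:ℝ) < C3 := by linarith
  rcases Nat.eq_zero_or_pos d with hd0 | hd
  · exfalso
    subst hd0
    rw [Stmt6.lambdaMin_zero_dim V0] at hmin
    have : (0:ℝ) < 2 / C3 := by positivity
    linarith
  -- main case
  have hlam1 : 1 ≤ lam := hlam.le
  have h2lam : (2:ℝ) ≤ 2 * lam := by linarith
  have hd0R : (0:ℝ) < d := by exact_mod_cast hd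
  set δ : ℝ := min (C3 / 2) C3⁻¹ / d with hδ
  have hδ0 : 0 < δ := by
    apply div_pos _ hd0R
    apply lt_min (by linarith)
    positivity
  have hdδ : (d:ℝ) * δ = min (C3 / 2) C3⁻¹ := by
    rw [hδ]
    field_simp
  have hdδ1 : (d:ℝ) * δ ≤ C3 / 2 := by rw [hdδ]; exact min_le_left _ _
  have hdδ2 : (d:ℝ) * δ ≤ C3⁻¹ := by rw [hdδ]; exact min_le_right _ _
  -- measurability of coordinates
  have hmeasC : ∀ k (i : Fin d), Measurable fun ω => X k ω i :=
    fun k i => (measurable_pi_apply i).comp (hmeas k)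
  -- squared norm
  set Sq : Ω → ℝ := fun ω => ∑ i, X 0 ω i ^ 2 with hSq
  have hSq0 : ∀ ω, 0 ≤ Sq ω := fun ω => Finset.sum_nonneg fun i _ => sq_nonneg _
  have hSqm : Measurable Sq := by
    apply Finset.measurable_sum
    exact fun i _ => (hmeasC 0 i).pow_const 2
  have intR : Integrable (fun ω => Sq ω ^ (2 * lam)) P := by
    have e : (fun ω => Real.sqrt (∑ i, X 0 ω i ^ 2) ^ (4 * lam))
        = fun ω => (∑ i, X 0 ω i ^ 2) ^ (2 * lam) := by
      funext ω
      rw [Real.sqrt_eq_rpow,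
        ← Real.rpow_mul (Finset.sum_nonneg fun i _ => sq_nonneg (X 0 ω i))]
      congr 1
      ring
    rw [e] at hmom
    exact hmom
  have hWabs : ∀ (i j : Fin d) ω, |X 0 ω i * X 0 ω j| ≤ Sq ω := by
    intro i j ω
    have h1 : X 0 ω i ^ 2 ≤ Sq ω :=
      Finset.single_le_sum (f := fun i => X 0 ω i ^ 2) (fun i _ => sq_nonneg _) (mem_univ i)
    have h2 : X 0 ω j ^ 2 ≤ Sq ω :=
      Finset.single_le_sum (f := fun i => X 0 ω i ^ 2) (fun i _ => sq_nonneg _) (mem_univ j)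
    rw [abs_mul]
    nlinarith [sq_abs (X 0 ω i), sq_abs (X 0 ω j), abs_nonneg (X 0 ω i),
      abs_nonneg (X 0 ω j), sq_nonneg (|X 0 ω i| - |X 0 ω j|)]
  have hCabs : ∀ (i : Fin d) ω, X 0 ω i ^ 2 ≤ Sq ω := fun i ω =>
    Finset.single_le_sum (f := fun i => X 0 ω i ^ 2) (fun i _ => sq_nonneg _) (mem_univ i)
  have intWmom : ∀ i j : Fin d,
      Integrable (fun ω => |X 0 ω i * X 0 ω j| ^ (2 * lam)) P := by
    intro i j
    have hmrw : Measurable fun ω => |X 0 ω i * X 0 ω j| ^ (2 * lam) :=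
      (Real.continuous_rpow_const (by linarith)).measurable.comp
        (((hmeasC 0 i).mul (hmeasC 0 j)).abs)
    refine intR.mono' hmrw.aestronglyMeasurable
      (Filter.Eventually.of_forall fun ω => ?_)
    rw [Real.norm_eq_abs, abs_of_nonneg (Real.rpow_nonneg (abs_nonneg _) _)]
    exact Real.rpow_le_rpow (abs_nonneg _) (hWabs i j ω) (by linarith)
  have intCmom : ∀ i : Fin d, Integrable (fun ω => |X 0 ω i| ^ (2 * lam)) P := by
    intro i
    have hmrw : Measurable fun ω => |X 0 ω i| ^ (2 * lam) :=
      (Real.continuous_rpow_const (by linarith)).measurable.comp ((hmeasC 0 i).abs)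
    refine ((integrable_const (1:ℝ)).add intR).mono' hmrw.aestronglyMeasurable
      (Filter.Eventually.of_forall fun ω => ?_)
    simp only [Pi.add_apply]
    rw [Real.norm_eq_abs, abs_of_nonneg (Real.rpow_nonneg (abs_nonneg _) _)]
    exact Stmt6.aux_sq_pow_bound hlam1 (hSq0 ω) (hCabs i ω)
  have intW_int : ∀ i j : Fin d, Integrable (fun ω => X 0 ω i * X 0 ω j) P :=
    fun i j => (Stmt6.integrable_of_abs_rpow ((hmeasC 0 i).mul (hmeasC 0 j)) h2lam
      (intWmom i j)).1
  have intC_int : ∀ i : Fin d, Integrable (fun ω => X 0 ω i) P :=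
    fun i => (Stmt6.integrable_of_abs_rpow (hmeasC 0 i) h2lam (intCmom i)).1
  -- covariance entry identity
  have hV0' : ∀ i j, V0 i j = (∫ ω, X 0 ω i * X 0 ω j ∂P) - μ i * μ j := by
    intro i j
    rw [hV0 i j]
    have e : (fun ω => (X 0 ω i - μ i) * (X 0 ω j - μ j))
        = fun ω => (X 0 ω i * X 0 ω j - (μ j * X 0 ω i + μ i * X 0 ω j)) + μ i * μ j :=
      funext fun ω => by ring
    rw [e]
    have int1 : Integrable (fun ω => μ j * X 0 ω i + μ i * X 0 ω j) P :=
      ((intC_int i).const_mul (μ j)).add ((intC_int j).const_mul (μ i))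
    have e1 : ∫ ω, ((X 0 ω i * X 0 ω j - (μ j * X 0 ω i + μ i * X 0 ω j)) + μ i * μ j) ∂P
        = (∫ ω, (X 0 ω i * X 0 ω j - (μ j * X 0 ω i + μ i * X 0 ω j)) ∂P)
          + ∫ _ω, (μ i * μ j) ∂P :=
      integral_add ((intW_int i j).sub int1) (integrable_const _)
    have e2 : ∫ ω, (X 0 ω i * X 0 ω j - (μ j * X 0 ω i + μ i * X 0 ω j)) ∂P
        = (∫ ω, X 0 ω i * X 0 ω j ∂P) - ∫ ω, (μ j * X 0 ω i + μ i * X 0 ω j) ∂P :=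
      integral_sub (intW_int i j) int1
    have e3 : ∫ ω, (μ j * X 0 ω i + μ i * X 0 ω j) ∂P
        = (∫ ω, μ j * X 0 ω i ∂P) + ∫ ω, μ i * X 0 ω j ∂P :=
      integral_add ((intC_int i).const_mul (μ j)) ((intC_int j).const_mul (μ i))
    rw [e1, e2, e3, MeasureTheory.integral_const_mul, MeasureTheory.integral_const_mul,
      MeasureTheory.integral_const]
    simp only [probReal_univ, smul_eq_mul, one_mul]
    rw [← hμ i, ← hμ j]
    ring
  -- per-pair tail bound
  have hpair : ∀ i j : Fin d, ∃ DD : ℝ, 0 ≤ DD ∧ ∀ n : ℕ, 1 ≤ n →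
      P {ω | δ < |sampleCov X n ω i j - V0 i j|}
        ≤ ENNReal.ofReal (DD * (n : ℝ) ^ (-lam)) := by
    intro i j
    set η : ℝ := min 1 (δ / (2 * (|μ i| + |μ j| + 1))) with hη
    have hηpos : 0 < η := by
      apply lt_min one_pos
      positivity
    have hη1 : η ≤ 1 := min_le_left _ _
    have hη2 : η * (|μ i| + |μ j| + 1) ≤ δ / 2 := by
      have h1 : η ≤ δ / (2 * (|μ i| + |μ j| + 1)) := min_le_right _ _
      have h2 : (0:ℝ) < |μ i| + |μ j| + 1 := by positivity
      calc η * (|μ i| + |μ j| + 1)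
          ≤ (δ / (2 * (|μ i| + |μ j| + 1))) * (|μ i| + |μ j| + 1) :=
            mul_le_mul_of_nonneg_right h1 h2.le
        _ = δ / 2 := by
            field_simp
    obtain ⟨DW, hDW0, hDW⟩ := Stmt6.tail_two_sided (P := P)
      (fun k ω => X k ω i * X k ω j)
      (fun k => (hmeasC k i).mul (hmeasC k j))
      (hindep.comp (g := fun _ : ℕ => fun v : Fin d → ℝ => v i * v j)
        (fun _ => (measurable_pi_apply i).mul (measurable_pi_apply j)))
      (fun k => (hident k).comp ((measurable_pi_apply i).mul (measurable_pi_apply j)))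
      lam hlam1 (intWmom i j) (δ / 2) (half_pos hδ0)
    obtain ⟨Di, hDi0, hDi⟩ := Stmt6.tail_two_sided (P := P)
      (fun k ω => X k ω i) (fun k => hmeasC k i)
      (hindep.comp (g := fun _ : ℕ => fun v : Fin d → ℝ => v i)
        (fun _ => measurable_pi_apply i))
      (fun k => (hident k).comp (measurable_pi_apply i))
      lam hlam1 (intCmom i) η hηpos
    obtain ⟨Dj, hDj0, hDj⟩ := Stmt6.tail_two_sided (P := P)
      (fun k ω => X k ω j) (fun k => hmeasC k j)
      (hindep.comp (g := fun _ : ℕ => fun v : Fin d → ℝ => v j)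
        (fun _ => measurable_pi_apply j))
      (fun k => (hident k).comp (measurable_pi_apply j))
      lam hlam1 (intCmom j) η hηpos
    refine ⟨DW + Di + Dj, by linarith, fun n hn => ?_⟩
    have hincl : {ω | δ < |sampleCov X n ω i j - V0 i j|} ⊆
        {ω | δ/2 ≤ |(n:ℝ)⁻¹ * (∑ k ∈ Finset.range n, X k ω i * X k ω j)
            - ∫ ω, X 0 ω i * X 0 ω j ∂P|}
        ∪ ({ω | η ≤ |(n:ℝ)⁻¹ * (∑ k ∈ Finset.range n, X k ω i) - ∫ ω, X 0 ω i ∂P|}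
          ∪ {ω | η ≤ |(n:ℝ)⁻¹ * (∑ k ∈ Finset.range n, X k ω j) - ∫ ω, X 0 ω j ∂P|}) := by
      intro ω hω
      rw [Set.mem_setOf_eq] at hω
      by_contra hcon
      simp only [Set.mem_union, Set.mem_setOf_eq, not_or, not_le] at hcon
      obtain ⟨hc1, hc2, hc3⟩ := hcon
      rw [← hμ i] at hc2
      rw [← hμ j] at hc3
      set A := (n:ℝ)⁻¹ * (∑ k ∈ Finset.range n, X k ω i * X k ω j) with hA
      set Bi := (n:ℝ)⁻¹ * (∑ k ∈ Finset.range n, X k ω i) with hBi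
      set Bj := (n:ℝ)⁻¹ * (∑ k ∈ Finset.range n, X k ω j) with hBj
      set m2 := ∫ ω, X 0 ω i * X 0 ω j ∂P with hm2
      have he : sampleCov X n ω i j - V0 i j = (A - m2) - (Bi * Bj - μ i * μ j) := by
        rw [Stmt6.sampleCov_apply X hn ω i j, hV0' i j]
        ring
      have habs1 : |sampleCov X n ω i j - V0 i j|
          ≤ |A - m2| + |Bi * Bj - μ i * μ j| := by
        rw [he, sub_eq_add_neg]
        refine (abs_add_le _ _).trans ?_
        rw [abs_neg]
        try rfl
      have hprod : |Bi * Bj - μ i * μ j| ≤ |Bi| * |Bj - μ j| + |Bi - μ i| * |μ j| := by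
        have e2 : Bi * Bj - μ i * μ j = Bi * (Bj - μ j) + (Bi - μ i) * μ j := by ring
        rw [e2]
        refine (abs_add_le _ _).trans ?_
        rw [abs_mul Bi (Bj - μ j), abs_mul (Bi - μ i) (μ j)]
      have hBib : |Bi| ≤ |μ i| + 1 := by
        have h4 := abs_sub_abs_le_abs_sub Bi (μ i)
        linarith [hc2, hη1]
      have t1 : |Bi| * |Bj - μ j| ≤ (|μ i| + 1) * η :=
        mul_le_mul hBib hc3.le (abs_nonneg _) (by positivity)
      have t2 : |Bi - μ i| * |μ j| ≤ η * |μ j| :=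
        mul_le_mul_of_nonneg_right hc2.le (abs_nonneg _)
      have e3 : (|μ i| + 1) * η + η * |μ j| = η * (|μ i| + |μ j| + 1) := by ring
      linarith [habs1, hprod, t1, t2, hc1, hη2, hω]
    have hr0 : 0 ≤ (n:ℝ) ^ (-lam) := Real.rpow_nonneg (Nat.cast_nonneg n) _
    calc P {ω | δ < |sampleCov X n ω i j - V0 i j|}
        ≤ P {ω | δ/2 ≤ |(n:ℝ)⁻¹ * (∑ k ∈ Finset.range n, X k ω i * X k ω j)
              - ∫ ω, X 0 ω i * X 0 ω j ∂P|}
          + (P {ω | η ≤ |(n:ℝ)⁻¹ * (∑ k ∈ Finset.range n, X k ω i) - ∫ ω, X 0 ω i ∂P|}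
            + P {ω | η ≤ |(n:ℝ)⁻¹ * (∑ k ∈ Finset.range n, X k ω j)
              - ∫ ω, X 0 ω j ∂P|}) :=
          le_trans (measure_mono hincl)
            ((measure_union_le _ _).trans (add_le_add le_rfl (measure_union_le _ _)))
      _ ≤ ENNReal.ofReal (DW * (n:ℝ) ^ (-lam))
          + (ENNReal.ofReal (Di * (n:ℝ) ^ (-lam)) + ENNReal.ofReal (Dj * (n:ℝ) ^ (-lam))) :=
          add_le_add (hDW n hn) (add_le_add (hDi n hn) (hDj n hn))
      _ = ENNReal.ofReal ((DW + Di + Dj) * (n:ℝ) ^ (-lam)) := by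
          rw [← ENNReal.ofReal_add (mul_nonneg hDi0 hr0) (mul_nonneg hDj0 hr0),
            ← ENNReal.ofReal_add (mul_nonneg hDW0 hr0)
              (add_nonneg (mul_nonneg hDi0 hr0) (mul_nonneg hDj0 hr0))]
          ring_nf
  -- assemble
  choose DD hDD0 hDD using hpair
  refine ⟨∑ i : Fin d, ∑ j : Fin d, DD i j, fun n hn => ?_⟩
  have hincl2 : {ω | C3 < lambdaMax (sampleCov X n ω) ∨ lambdaMin (sampleCov X n ω) < C3⁻¹}
      ⊆ ⋃ p ∈ (Finset.univ : Finset (Fin d × Fin d)),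
          {ω | δ < |sampleCov X n ω p.1 p.2 - V0 p.1 p.2|} := by
    intro ω hω
    by_contra hcon
    simp only [Set.mem_iUnion, Set.mem_setOf_eq, not_exists, not_lt] at hcon
    have hcl : ∀ i j : Fin d, |sampleCov X n ω i j - V0 i j| ≤ δ := fun i j =>
      hcon (i, j) (Finset.mem_univ _)
    obtain ⟨hub, hlb⟩ := Stmt6.lambda_entrywise hd (sampleCov X n ω) V0 hδ0.le hcl
    have hC3inveq : 2 / C3 - C3⁻¹ = C3⁻¹ := by
      rw [div_eq_mul_inv]
      ring
    rcases hω with h | h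
    · linarith [hub, hdδ1]
    · linarith [hlb, hdδ2]
  calc P {ω | C3 < lambdaMax (sampleCov X n ω) ∨ lambdaMin (sampleCov X n ω) < C3⁻¹}
      ≤ P (⋃ p ∈ (Finset.univ : Finset (Fin d × Fin d)),
          {ω | δ < |sampleCov X n ω p.1 p.2 - V0 p.1 p.2|}) := measure_mono hincl2
    _ ≤ ∑ p ∈ (Finset.univ : Finset (Fin d × Fin d)),
          P {ω | δ < |sampleCov X n ω p.1 p.2 - V0 p.1 p.2|} :=
        measure_biUnion_finset_le _ _
    _ ≤ ∑ p ∈ (Finset.univ : Finset (Fin d × Fin d)),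
          ENNReal.ofReal (DD p.1 p.2 * (n:ℝ) ^ (-lam)) :=
        Finset.sum_le_sum fun p _ => hDD p.1 p.2 n hn
    _ = ENNReal.ofReal (∑ p ∈ (Finset.univ : Finset (Fin d × Fin d)),
          DD p.1 p.2 * (n:ℝ) ^ (-lam)) :=
        (ENNReal.ofReal_sum_of_nonneg fun p _ =>
          mul_nonneg (hDD0 p.1 p.2) (Real.rpow_nonneg (Nat.cast_nonneg n) _)).symm
    _ = ENNReal.ofReal ((∑ i : Fin d, ∑ j : Fin d, DD i j) * (n:ℝ) ^ (-lam)) := by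
        congr 1
        rw [Fintype.sum_prod_type, Finset.sum_mul]
        exact Finset.sum_congr rfl fun i _ => by rw [Finset.sum_mul]
end

section
/- Let X, X_1, X_2, … be i.i.d. random vectors in ℝ^d with characteristic function χ(t) = E[exp(i tᵀX)] satisfying Cramér's condition, and let χ*_n(t) = n^{-1} Σ_{j=1}^n exp(i tᵀX_j) denote the empirical characteristic function. Fix constants u > 0, ν > 0, C > 0, and an integer m ≥ 2. Then P( ∫_{ℝ^d} |χ*_n(n^{-1/2+u} t) − χ(n^{-1/2+u} t)|^m exp(−C ‖t‖^{1/2}) dt > n^{-d(u+1) − (ν+3)/2} ) = O( n^{-(m/2 − d(u+1) − (ν+3)/2)} ) as n → ∞. In particular, for any λ > 0, if m is chosen large enough that m/2 − d(u+1) − (ν+3)/2 ≥ λ, then this probability is O(n^{-λ}). -/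
open MeasureTheory ProbabilityTheory BigOperators Finset Filter

/-- The characteristic function `χ(t) = E[exp(i tᵀX)]` of a random vector. -/
noncomputable def charFun {Ω : Type*} [MeasurableSpace Ω] (P : Measure Ω)
    {d : ℕ} (X : Ω → (Fin d → ℝ)) (t : Fin d → ℝ) : ℂ :=
  ∫ ω, Complex.exp (Complex.I * ((∑ k, t k * X ω k : ℝ) : ℂ)) ∂P

/-- The empirical characteristic function
`χ*ₙ(t) = n⁻¹ ∑_{j=1}^n exp(i tᵀXⱼ)` of the sample `X₁(ω), …, Xₙ(ω)`. -/
noncomputable def empCharFun {Ω : Type*} {d : ℕ} (X : ℕ → Ω → (Fin d → ℝ))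
    (n : ℕ) (ω : Ω) (t : Fin d → ℝ) : ℂ :=
  (n : ℂ)⁻¹ * ∑ j ∈ Finset.range n,
    Complex.exp (Complex.I * ((∑ k, t k * X j ω k : ℝ) : ℂ))

set_option maxHeartbeats 1000000

noncomputable def momC : ℕ → ℝ
  | 0 => 1
  | (k+1) => 2 * 16^(k+1) * (1 + momC k)

lemma momC_pos : ∀ k, (0:ℝ) < momC k
  | 0 => one_pos
  | (k+1) => by
      have := momC_pos k
      simp only [momC]
      positivity

lemma integrable_of_bdd {Ω : Type*} [MeasurableSpace Ω] {P : Measure Ω} [IsProbabilityMeasure P]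
    {f : Ω → ℝ} {c : ℝ} (hf : AEStronglyMeasurable f P) (h : ∀ ω, |f ω| ≤ c) :
    Integrable f P :=
  (integrable_const c).mono' hf (ae_of_all _ (fun ω => by simpa using h ω))

lemma abs_pow_le_one_add {a : ℝ} {i K : ℕ} (h : i ≤ 2*K) : |a|^i ≤ 1 + a^(2*K) := by
  have hev : a ^ (2*K) = (a^2)^K := by rw [pow_mul]
  have hnn : 0 ≤ a^(2*K) := by rw [hev]; positivity
  rcases le_total |a| 1 with ha | ha
  · calc |a|^i ≤ 1^i := pow_le_pow_left₀ (abs_nonneg a) ha i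
      _ = 1 := one_pow i
      _ ≤ 1 + a^(2*K) := by linarith
  · calc |a|^i ≤ |a|^(2*K) := pow_le_pow_right₀ ha h
      _ = a^(2*K) := (even_two_mul K).pow_abs a
      _ ≤ 1 + a^(2*K) := by linarith

lemma ineqA {x : ℝ} (hx : 0 ≤ x) (k : ℕ) : 1 + x^k ≤ 2*(x+1)^k := by
  have h1 : (1:ℝ) ≤ (x+1)^k := one_le_pow₀ (by linarith)
  have h2 : x^k ≤ (x+1)^k := pow_le_pow_left₀ hx (by linarith) k
  linarith

lemma ineqB {x : ℝ} (hx : 0 ≤ x) (k : ℕ) : x^(k+1) + (x+1)^k ≤ (x+1)^(k+1) := by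
  have h1 : x^k ≤ (x+1)^k := pow_le_pow_left₀ hx (by linarith) k
  have h2 : x * x^k ≤ x * (x+1)^k := mul_le_mul_of_nonneg_left h1 hx
  calc x^(k+1) + (x+1)^k = x * x^k + (x+1)^k := by ring
    _ ≤ x * (x+1)^k + (x+1)^k := by linarith
    _ = (x+1)^(k+1) := by ring

lemma add_pow_le_two_pow {a b : ℝ} (ha : 0 ≤ a) (hb : 0 ≤ b) (m : ℕ) :
    (a+b)^m ≤ 2^m * (a^m + b^m) := by
  have hA : 0 ≤ a^m := pow_nonneg ha m
  have hB : 0 ≤ b^m := pow_nonneg hb m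
  rcases le_total a b with h|h
  · calc (a+b)^m ≤ (2*b)^m := pow_le_pow_left₀ (by linarith) (by linarith) m
      _ = 2^m * b^m := mul_pow 2 b m
      _ ≤ 2^m * (a^m + b^m) := by
          have : (0:ℝ) ≤ 2^m := by positivity
          nlinarith
  · calc (a+b)^m ≤ (2*a)^m := pow_le_pow_left₀ (by linarith) (by linarith) m
      _ = 2^m * a^m := mul_pow 2 a m
      _ ≤ 2^m * (a^m + b^m) := by
          have : (0:ℝ) ≤ 2^m := by positivity
          nlinarith

lemma moment_bound {Ω : Type*} [MeasurableSpace Ω] (P : Measure Ω) [IsProbabilityMeasure P]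
    (Y : ℕ → Ω → ℝ) (hYmeas : ∀ j, Measurable (Y j))
    (hbdd : ∀ j ω, |Y j ω| ≤ 2) (hcent : ∀ j, ∫ ω, Y j ω ∂P = 0)
    (hind : ∀ n : ℕ, IndepFun (∑ j ∈ range n, Y j) (Y n) P) :
    ∀ k n : ℕ, ∫ ω, ((∑ j ∈ range n, Y j) ω)^(2*k) ∂P ≤ momC k * (n:ℝ)^k := by
  have Smeas : ∀ n : ℕ, Measurable (∑ j ∈ range n, Y j) := by
    intro n
    have h : Measurable (fun ω => ∑ j ∈ range n, Y j ω) :=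
      Finset.measurable_sum _ (fun j _ => hYmeas j)
    have he : (∑ j ∈ range n, Y j) = (fun ω => ∑ j ∈ range n, Y j ω) := by
      ext ω; simp
    rw [he]; exact h
  have Sbdd : ∀ (n : ℕ) ω, |(∑ j ∈ range n, Y j) ω| ≤ 2*n := by
    intro n ω
    calc |(∑ j ∈ range n, Y j) ω| = |∑ j ∈ range n, Y j ω| := by simp [Finset.sum_apply]
      _ ≤ ∑ j ∈ range n, |Y j ω| := Finset.abs_sum_le_sum_abs _ _
      _ ≤ ∑ _j ∈ range n, (2:ℝ) := Finset.sum_le_sum (fun j _ => hbdd j ω)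
      _ = 2*n := by simp [mul_comm]
  intro k
  induction k with
  | zero => intro n; simp [momC]
  | succ k ihk =>
    intro n
    induction n with
    | zero =>
      simp only [range_zero, Finset.sum_empty, Nat.cast_zero, Pi.zero_apply]
      rw [zero_pow (by omega)]
      simp [zero_pow]
    | succ n ihn =>
      set S : Ω → ℝ := ∑ j ∈ range n, Y j with hS
      set Z : Ω → ℝ := Y n with hZ
      have hsum : (∑ j ∈ range (n+1), Y j) = S + Z := Finset.sum_range_succ Y n
      -- integrability of all the term products
      have hintterm : ∀ a b : ℕ, Integrable (fun ω => (S ω)^a * (Z ω)^b) P := by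
        intro a b
        refine integrable_of_bdd (c := (2*n)^a * 2^b)
          (((Smeas n).pow_const a).mul ((hYmeas n).pow_const b)).aestronglyMeasurable ?_
        intro ω
        rw [abs_mul, abs_pow, abs_pow]
        have h1 : |S ω|^a ≤ (2*n)^a :=
          pow_le_pow_left₀ (abs_nonneg _) (Sbdd n ω) a
        have h2 : |Z ω|^b ≤ 2^b := pow_le_pow_left₀ (abs_nonneg _) (hbdd n ω) b
        exact mul_le_mul h1 h2 (by positivity) (by positivity)
      -- independence of powers
      have hindep_pow : ∀ a b : ℕ,
          ∫ ω, (S ω)^a * (Z ω)^b ∂P = (∫ ω, (S ω)^a ∂P) * (∫ ω, (Z ω)^b ∂P) := by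
        intro a b
        have h := ((hind n).comp (measurable_id.pow_const a)
          (measurable_id.pow_const b)).integral_mul_eq_mul_integral
          (((Smeas n).pow_const a).aestronglyMeasurable)
          (((hYmeas n).pow_const b).aestronglyMeasurable)
        exact h
      -- binomial expansion
      have hexp : ∫ ω, ((S + Z) ω)^(2*(k+1)) ∂P
          = ∑ j ∈ range (2*(k+1)+1),
              (∫ ω, (S ω)^j ∂P) * (∫ ω, (Z ω)^(2*(k+1)-j) ∂P) * ((2*(k+1)).choose j : ℝ) := by
        have hpt : ∀ ω, ((S + Z) ω)^(2*(k+1))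
            = ∑ j ∈ range (2*(k+1)+1), (S ω)^j * (Z ω)^(2*(k+1)-j) * ((2*(k+1)).choose j : ℝ) := by
          intro ω
          simp only [Pi.add_apply]
          exact add_pow (S ω) (Z ω) (2*(k+1))
        rw [integral_congr_ae (ae_of_all _ hpt)]
        rw [integral_finset_sum _ (fun j _ => ((hintterm j _).mul_const _))]
        refine Finset.sum_congr rfl (fun j _ => ?_)
        rw [integral_mul_const, hindep_pow]
      -- rewrite goal via hsum and hexp
      have hSfun : S = (∑ j ∈ range n, Y j) := hS
      have ihkn : ∫ ω, (S ω)^(2*k) ∂P ≤ momC k * (n:ℝ)^k := ihk n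
      have ihn' : ∫ ω, (S ω)^(2*(k+1)) ∂P ≤ momC (k+1) * (n:ℝ)^(k+1) := ihn
      have hintS : ∀ a : ℕ, Integrable (fun ω => (S ω)^a) P := by
        intro a
        refine integrable_of_bdd (c := (2*n)^a)
          ((Smeas n).pow_const a).aestronglyMeasurable (fun ω => ?_)
        rw [abs_pow]
        exact pow_le_pow_left₀ (abs_nonneg _) (Sbdd n ω) a
      have hintSabs : ∀ a : ℕ, Integrable (fun ω => |S ω|^a) P := by
        intro a
        refine integrable_of_bdd (c := (2*n)^a)
          (((Smeas n).abs).pow_const a).aestronglyMeasurable (fun ω => ?_)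
        rw [abs_pow, abs_abs]
        exact pow_le_pow_left₀ (abs_nonneg _) (Sbdd n ω) a
      set A : ℝ := 1 + momC k * (n:ℝ)^k with hA
      have hA0 : (0:ℝ) ≤ A := by
        have := momC_pos k
        have : (0:ℝ) ≤ momC k * (n:ℝ)^k := by positivity
        simp only [hA]; linarith
      have hSj : ∀ j : ℕ, j ≤ 2*k → |∫ ω, (S ω)^j ∂P| ≤ A := by
        intro j hj
        have hint2 : Integrable (fun ω => 1 + (S ω)^(2*k)) P :=
          (integrable_const 1).add (hintS (2*k))
        calc |∫ ω, (S ω)^j ∂P| ≤ ∫ ω, |(S ω)^j| ∂P := by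
              simpa [Real.norm_eq_abs] using norm_integral_le_integral_norm (fun ω => (S ω)^j) (μ := P)
          _ = ∫ ω, |S ω|^j ∂P := by simp [abs_pow]
          _ ≤ ∫ ω, (1 + (S ω)^(2*k)) ∂P :=
              integral_mono (hintSabs j) hint2 (fun ω => abs_pow_le_one_add hj)
          _ = 1 + ∫ ω, (S ω)^(2*k) ∂P := by
              rw [integral_add (integrable_const 1) (hintS (2*k))]; simp
          _ ≤ A := by simp only [hA]; linarith
      have hZe : ∀ e : ℕ, e ≤ 2*(k+1) → |∫ ω, (Z ω)^e ∂P| ≤ 2^(2*(k+1)) := by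
        intro e he
        have hintZ : Integrable (fun ω => (Z ω)^e) P := by
          refine integrable_of_bdd (c := 2^e)
            ((hYmeas n).pow_const e).aestronglyMeasurable (fun ω => ?_)
          rw [abs_pow]
          exact pow_le_pow_left₀ (abs_nonneg _) (hbdd n ω) e
        have hintZabs : Integrable (fun ω => |Z ω|^e) P := by
          refine integrable_of_bdd (c := 2^e)
            (((hYmeas n).abs).pow_const e).aestronglyMeasurable (fun ω => ?_)
          rw [abs_pow, abs_abs]
          exact pow_le_pow_left₀ (abs_nonneg _) (hbdd n ω) e
        calc |∫ ω, (Z ω)^e ∂P| ≤ ∫ ω, |(Z ω)^e| ∂P := by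
              simpa [Real.norm_eq_abs] using norm_integral_le_integral_norm (fun ω => (Z ω)^e) (μ := P)
          _ = ∫ ω, |Z ω|^e ∂P := by simp [abs_pow]
          _ ≤ ∫ _ω, (2:ℝ)^e ∂P := integral_mono hintZabs (integrable_const _)
              (fun ω => pow_le_pow_left₀ (abs_nonneg _) (hbdd n ω) e)
          _ = 2^e := by simp
          _ ≤ 2^(2*(k+1)) := pow_le_pow_right₀ one_le_two he
      have hchoose : (∑ j ∈ range (2*k+1), ((2*(k+1)).choose j : ℝ)) ≤ 2^(2*(k+1)) := by
        have hnat : (∑ j ∈ range (2*k+1), (2*(k+1)).choose j) ≤ 2^(2*(k+1)) := by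
          calc (∑ j ∈ range (2*k+1), (2*(k+1)).choose j)
              ≤ ∑ j ∈ range (2*(k+1)+1), (2*(k+1)).choose j :=
                Finset.sum_le_sum_of_subset (Finset.range_subset_range.2 (by omega))
            _ = 2^(2*(k+1)) := Nat.sum_range_choose _
        exact_mod_cast hnat
      have hsumle : ∑ j ∈ range (2*k+1),
          (∫ ω, (S ω)^j ∂P) * (∫ ω, (Z ω)^(2*(k+1)-j) ∂P) * ((2*(k+1)).choose j : ℝ)
          ≤ 2^(2*(k+1)) * (2^(2*(k+1)) * A) := by
        calc ∑ j ∈ range (2*k+1),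
            (∫ ω, (S ω)^j ∂P) * (∫ ω, (Z ω)^(2*(k+1)-j) ∂P) * ((2*(k+1)).choose j : ℝ)
            ≤ ∑ j ∈ range (2*k+1), ((2*(k+1)).choose j : ℝ) * (2^(2*(k+1)) * A) := by
              refine Finset.sum_le_sum (fun j hj => ?_)
              have hj' : j ≤ 2*k := by
                have := Finset.mem_range.1 hj; omega
              have hxy : (∫ ω, (S ω)^j ∂P) * (∫ ω, (Z ω)^(2*(k+1)-j) ∂P)
                  ≤ A * 2^(2*(k+1)) := by
                refine (le_abs_self _).trans ?_
                rw [abs_mul]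
                exact mul_le_mul (hSj j hj') (hZe _ (Nat.sub_le _ _)) (abs_nonneg _) hA0
              have hc : (0:ℝ) ≤ ((2*(k+1)).choose j : ℝ) := Nat.cast_nonneg _
              calc (∫ ω, (S ω)^j ∂P) * (∫ ω, (Z ω)^(2*(k+1)-j) ∂P) * ((2*(k+1)).choose j : ℝ)
                  ≤ (A * 2^(2*(k+1))) * ((2*(k+1)).choose j : ℝ) :=
                    mul_le_mul_of_nonneg_right hxy hc
                _ = ((2*(k+1)).choose j : ℝ) * (2^(2*(k+1)) * A) := by ring
          _ = (∑ j ∈ range (2*k+1), ((2*(k+1)).choose j : ℝ)) * (2^(2*(k+1)) * A) := by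
              rw [← Finset.sum_mul]
          _ ≤ 2^(2*(k+1)) * (2^(2*(k+1)) * A) := by
              have h0 : (0:ℝ) ≤ 2^(2*(k+1)) * A := by positivity
              exact mul_le_mul_of_nonneg_right hchoose h0
      -- now rewrite and conclude
      rw [hsum, hexp]
      have h2K : 2*(k+1)+1 = (2*k+1)+1+1 := by ring
      rw [h2K, Finset.sum_range_succ, Finset.sum_range_succ]
      have e0 : 2*(k+1) - (2*k+1+1) = 0 := by omega
      have e1 : 2*(k+1) - (2*k+1) = 1 := by omega
      have ec : (2*(k+1)).choose (2*k+1+1) = 1 := by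
        have h' : 2*k+1+1 = 2*(k+1) := by omega
        rw [h', Nat.choose_self]
      rw [e0, e1, ec]
      have hZint : ∫ ω, (Z ω)^1 ∂P = 0 := by
        simp only [pow_one]
        exact hcent n
      rw [hZint]
      simp only [pow_zero, integral_const, measure_univ, ENNReal.toReal_one, probReal_univ, smul_eq_mul,
        one_mul, mul_one, Nat.cast_one, zero_mul, mul_zero, add_zero]
      -- goal : Σ + ∫ S^{2(k+1)} ≤ momC (k+1) * (↑(n+1))^(k+1)
      have hx : (0:ℝ) ≤ (n:ℝ) := Nat.cast_nonneg n
      have hcast : ((n+1 : ℕ) : ℝ) = (n:ℝ) + 1 := by push_cast; ring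
      have hA2 : A ≤ (1 + momC k) * (1 + (n:ℝ)^k) := by
        have h1 := momC_pos k
        have h2 : (0:ℝ) ≤ (n:ℝ)^k := by positivity
        simp only [hA]; nlinarith
      have hstep : (2:ℝ)^(2*(k+1)) * (2^(2*(k+1)) * A) ≤ momC (k+1) * ((n:ℝ)+1)^k := by
        have hpow : (2:ℝ)^(2*(k+1)) * (2:ℝ)^(2*(k+1)) = 16^(k+1) := by
          rw [← pow_add]
          have h4 : 2*(k+1) + 2*(k+1) = 4*(k+1) := by ring
          rw [h4, pow_mul]
          norm_num
        calc (2:ℝ)^(2*(k+1)) * (2^(2*(k+1)) * A) = (16:ℝ)^(k+1) * A := by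
              rw [← mul_assoc, hpow]
          _ ≤ (16:ℝ)^(k+1) * ((1 + momC k) * (1 + (n:ℝ)^k)) := by
              have : (0:ℝ) ≤ (16:ℝ)^(k+1) := by positivity
              exact mul_le_mul_of_nonneg_left hA2 this
          _ ≤ (16:ℝ)^(k+1) * ((1 + momC k) * (2*((n:ℝ)+1)^k)) := by
              have h1 := momC_pos k
              have h2 : (0:ℝ) ≤ (16:ℝ)^(k+1) * (1 + momC k) := by positivity
              have h3 := ineqA hx k
              calc (16:ℝ)^(k+1) * ((1 + momC k) * (1 + (n:ℝ)^k))
                  = ((16:ℝ)^(k+1) * (1 + momC k)) * (1 + (n:ℝ)^k) := by ring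
                _ ≤ ((16:ℝ)^(k+1) * (1 + momC k)) * (2*((n:ℝ)+1)^k) :=
                    mul_le_mul_of_nonneg_left h3 h2
                _ = (16:ℝ)^(k+1) * ((1 + momC k) * (2*((n:ℝ)+1)^k)) := by ring
          _ = momC (k+1) * ((n:ℝ)+1)^k := by
              show (16:ℝ)^(k+1) * ((1 + momC k) * (2*((n:ℝ)+1)^k))
                  = 2 * 16^(k+1) * (1 + momC k) * ((n:ℝ)+1)^k
              ring
      calc (∑ j ∈ range (2*k+1),
            (∫ ω, (S ω)^j ∂P) * (∫ ω, (Z ω)^(2*(k+1)-j) ∂P) * ((2*(k+1)).choose j : ℝ))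
            + ∫ ω, (S ω)^(2*(k+1)) ∂P
          ≤ (2^(2*(k+1)) * (2^(2*(k+1)) * A)) + momC (k+1) * (n:ℝ)^(k+1) :=
            add_le_add hsumle ihn'
        _ ≤ momC (k+1) * ((n:ℝ)+1)^k + momC (k+1) * (n:ℝ)^(k+1) := by linarith [hstep]
        _ = momC (k+1) * ((n:ℝ)^(k+1) + ((n:ℝ)+1)^k) := by ring
        _ ≤ momC (k+1) * ((n:ℝ)+1)^(k+1) :=
            mul_le_mul_of_nonneg_left (ineqB hx k) (momC_pos (k+1)).le
        _ = momC (k+1) * ((n+1 : ℕ) : ℝ)^(k+1) := by rw [hcast]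




-- z^M ≤ M! * exp z  for z ≥ 0
lemma pow_le_factorial_mul_exp {z : ℝ} (hz : 0 ≤ z) (M : ℕ) :
    z^M ≤ (M.factorial : ℝ) * Real.exp z := by
  have h1 : z^M / (M.factorial : ℝ) ≤ Real.exp z := by
    refine le_trans ?_ (Real.sum_le_exp_of_nonneg hz (M+1))
    exact Finset.single_le_sum (f := fun i => z^i / (i.factorial : ℝ))
      (fun i _ => by positivity) (Finset.self_mem_range_succ M)
  have hM : (0:ℝ) < (M.factorial : ℝ) := by exact_mod_cast M.factorial_pos
  calc z^M = (z^M / (M.factorial : ℝ)) * (M.factorial : ℝ) := by field_simp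
    _ ≤ Real.exp z * (M.factorial : ℝ) := mul_le_mul_of_nonneg_right h1 hM.le
    _ = (M.factorial : ℝ) * Real.exp z := by ring

lemma weight_integrable (d : ℕ) (C : ℝ) (hC : 0 < C) :
    Integrable (fun t : Fin d → ℝ =>
      Real.exp (-C * Real.sqrt (∑ i, t i ^ 2) ^ ((1:ℝ)/2))) := by
  set M : ℕ := 2*(d+1) with hM
  set c1 : ℝ := 2^M * (1 + (M.factorial : ℝ)/C^M) with hc1
  have hc10 : 0 < c1 := by
    have h1 : (0:ℝ) < (M.factorial : ℝ) := by exact_mod_cast M.factorial_pos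
    rw [hc1]; positivity
  have hptw : ∀ t : Fin d → ℝ,
      (1 + ‖t‖)^((d:ℝ)+1) ≤ c1 * Real.exp (C * Real.sqrt (∑ i, t i ^ 2) ^ ((1:ℝ)/2)) := by
    intro t
    set N : ℝ := Real.sqrt (∑ i, t i ^ 2) with hN
    have hN0 : 0 ≤ N := Real.sqrt_nonneg _
    set w : ℝ := N ^ ((1:ℝ)/2) with hw
    have hw0 : 0 ≤ w := Real.rpow_nonneg hN0 _
    have hw2 : w^2 = N := by
      rw [hw, ← Real.rpow_natCast (N ^ ((1:ℝ)/2)) 2, ← Real.rpow_mul hN0]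
      norm_num
    have hnorm : ‖t‖ ≤ N := by
      rw [pi_norm_le_iff_of_nonneg hN0]
      intro i
      rw [Real.norm_eq_abs, ← Real.sqrt_sq_eq_abs]
      exact Real.sqrt_le_sqrt (Finset.single_le_sum (f := fun i => t i ^ 2)
        (fun i _ => sq_nonneg _) (Finset.mem_univ i))
    have hE : Real.exp (C * w) > 0 := Real.exp_pos _
    have step1 : (1 + ‖t‖)^((d:ℝ)+1) = (1 + ‖t‖)^(d+1 : ℕ) := by
      rw [← Real.rpow_natCast (1 + ‖t‖) (d+1)]
      push_cast
      ring_nf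
    rw [step1]
    calc (1 + ‖t‖)^(d+1:ℕ) ≤ (1 + N)^(d+1:ℕ) :=
          pow_le_pow_left₀ (by positivity) (by linarith) _
      _ = (1 + w^2)^(d+1:ℕ) := by rw [hw2]
      _ ≤ ((1+w)^2)^(d+1:ℕ) := by
          refine pow_le_pow_left₀ (by positivity) ?_ _
          nlinarith
      _ = (1+w)^M := by rw [← pow_mul, hM]
      _ ≤ 2^M * (1^M + w^M) := add_pow_le_two_pow (by norm_num) hw0 M
      _ = 2^M * (1 + w^M) := by norm_num
      _ ≤ 2^M * (Real.exp (C*w) + ((M.factorial : ℝ)/C^M) * Real.exp (C*w)) := by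
          have h1 : (1:ℝ) ≤ Real.exp (C*w) := by
            rw [← Real.exp_zero]
            exact Real.exp_le_exp.2 (by positivity)
          have h2 : w^M ≤ ((M.factorial : ℝ)/C^M) * Real.exp (C*w) := by
            have h3 := pow_le_factorial_mul_exp (mul_nonneg hC.le hw0) M
            rw [mul_pow] at h3
            have hCM : (0:ℝ) < C^M := by positivity
            rw [div_mul_eq_mul_div, le_div_iff₀ hCM]
            calc w^M * C^M = C^M * w^M := by ring
              _ ≤ (M.factorial : ℝ) * Real.exp (C*w) := h3
          have h4 : (0:ℝ) ≤ 2^M := by positivity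
          exact mul_le_mul_of_nonneg_left (add_le_add h1 h2) h4
      _ = c1 * Real.exp (C * w) := by rw [hc1]; ring
  have hmeasw : Measurable (fun t : Fin d → ℝ =>
      Real.exp (-C * Real.sqrt (∑ i, t i ^ 2) ^ ((1:ℝ)/2))) := by fun_prop
  refine Integrable.mono' ((integrable_one_add_norm (μ := volume)
    (E := Fin d → ℝ) (r := (d:ℝ)+1) (by simp)).const_mul c1)
    hmeasw.aestronglyMeasurable (ae_of_all _ (fun t => ?_))
  have hb : (0:ℝ) < (1 + ‖t‖) := by positivity
  have hbp : (0:ℝ) < (1 + ‖t‖)^((d:ℝ)+1) := Real.rpow_pos_of_pos hb _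
  rw [Real.norm_eq_abs, abs_of_pos (Real.exp_pos _)]
  have h5 := hptw t
  rw [neg_mul, Real.exp_neg]
  rw [Real.rpow_neg hb.le]
  set q : ℝ := Real.sqrt (∑ i, t i ^ 2) ^ ((1:ℝ)/2) with hq
  have h6 : (1 + ‖t‖)^((d:ℝ)+1) / Real.exp (C*q) ≤ c1 := by
    rw [div_le_iff₀ (Real.exp_pos _)]
    exact h5
  calc (Real.exp (C*q))⁻¹
      = ((1 + ‖t‖)^((d:ℝ)+1))⁻¹ * ((1 + ‖t‖)^((d:ℝ)+1) / Real.exp (C*q)) := by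
        field_simp
    _ ≤ ((1 + ‖t‖)^((d:ℝ)+1))⁻¹ * c1 := mul_le_mul_of_nonneg_left h6 (by positivity)
    _ = c1 * ((1 + ‖t‖)^((d:ℝ)+1))⁻¹ := by ring

section ecf
variable {Ω : Type*} [MeasurableSpace Ω] (P : Measure Ω) [IsProbabilityMeasure P]
    {d : ℕ} (X : ℕ → Ω → (Fin d → ℝ)) (s : Fin d → ℝ)

-- basic measurability of the exponential kernel
lemma gmeas : Measurable (fun x : Fin d → ℝ =>
    Complex.exp (Complex.I * ((∑ k, s k * x k : ℝ) : ℂ))) := by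
  apply Complex.measurable_exp.comp
  apply Measurable.const_mul
  apply Complex.measurable_ofReal.comp
  exact Finset.measurable_sum _ (fun k _ => by fun_prop)

lemma gabs (x : Fin d → ℝ) :
    ‖Complex.exp (Complex.I * ((∑ k, s k * x k : ℝ) : ℂ))‖ = 1 := by
  rw [Complex.norm_exp]
  simp [Complex.mul_re]

lemma charFun_abs_le (hX : Measurable (X 0)) : ‖charFun P (X 0) s‖ ≤ 1 := by
  have h := norm_integral_le_of_norm_le_const (μ := P) (C := 1)
    (f := fun ω => Complex.exp (Complex.I * ((∑ k, s k * X 0 ω k : ℝ) : ℂ)))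
    (ae_of_all _ (fun ω => by rw [gabs]))
  simpa [_root_.charFun] using h



lemma ecf_moment (hmeas : ∀ i, Measurable (X i))
    (hindep : iIndepFun X P)
    (hident : ∀ i, IdentDistrib (X i) (X 0) P P)
    (m : ℕ) (n : ℕ) (hn : 1 ≤ n) :
    ∫ ω, ‖empCharFun X n ω s - charFun P (X 0) s‖ ^ m ∂P
      ≤ Real.sqrt (2^(m+1) * momC m) * Real.sqrt (((n:ℝ) ^ m)⁻¹) := by
  classical
  set g : (Fin d → ℝ) → ℂ := fun x =>
    Complex.exp (Complex.I * ((∑ k, s k * x k : ℝ) : ℂ)) with hg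
  have hgm : Measurable g := gmeas s
  set χ : ℂ := charFun P (X 0) s with hχdef
  have hχ : ‖χ‖ ≤ 1 := charFun_abs_le P X s (hmeas 0)
  have hn0 : (n:ℝ) ≠ 0 := by positivity
  have hnC0 : (n:ℂ) ≠ 0 := Nat.cast_ne_zero.2 (by omega)
  set R : ℕ → Ω → ℝ := fun j ω => (g (X j ω) - χ).re with hR
  set Im : ℕ → Ω → ℝ := fun j ω => (g (X j ω) - χ).im with hIm
  have hRmeas : ∀ j, Measurable (R j) :=
    fun j => Complex.measurable_re.comp ((hgm.comp (hmeas j)).sub measurable_const)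
  have hImeas : ∀ j, Measurable (Im j) :=
    fun j => Complex.measurable_im.comp ((hgm.comp (hmeas j)).sub measurable_const)
  have habsY : ∀ j ω, ‖g (X j ω) - χ‖ ≤ 2 := by
    intro j ω
    calc ‖g (X j ω) - χ‖ ≤ ‖g (X j ω)‖ + ‖χ‖ := by
          simpa using norm_sub_le (g (X j ω)) χ
      _ ≤ 1 + 1 := by rw [hg]; exact add_le_add (le_of_eq (gabs s (X j ω))) hχ
      _ = 2 := by norm_num
  have hbddR : ∀ j ω, |R j ω| ≤ 2 :=
    fun j ω => (Complex.abs_re_le_norm _).trans (habsY j ω)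
  have hbddI : ∀ j ω, |Im j ω| ≤ 2 :=
    fun j ω => (Complex.abs_im_le_norm _).trans (habsY j ω)
  have hintg : ∀ j, Integrable (fun ω => g (X j ω)) P := by
    intro j
    refine (integrable_const (1:ℝ)).mono'
      ((hgm.comp (hmeas j)).aestronglyMeasurable) (ae_of_all _ (fun ω => ?_))
    rw [hg]
    exact le_of_eq (gabs s (X j ω))
  have hintY : ∀ j, Integrable (fun ω => g (X j ω) - χ) P :=
    fun j => (hintg j).sub (integrable_const χ)
  have hEg : ∀ j, ∫ ω, g (X j ω) ∂P = χ := by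
    intro j
    have h1 : IdentDistrib (g ∘ X j) (g ∘ X 0) P P := (hident j).comp hgm
    have h2 := h1.integral_eq
    exact h2
  have hEY : ∀ j, ∫ ω, (g (X j ω) - χ) ∂P = 0 := by
    intro j
    rw [integral_sub (hintg j) (integrable_const χ), hEg j]
    simp
  have hcentR : ∀ j, ∫ ω, R j ω ∂P = 0 := by
    intro j
    have h2 : ∫ ω, (g (X j ω) - χ).re ∂P = (∫ ω, (g (X j ω) - χ) ∂P).re := by
      simpa using integral_re (hintY j)
    rw [hR]
    simp only []
    rw [h2, hEY j]
    simp
  have hcentI : ∀ j, ∫ ω, Im j ω ∂P = 0 := by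
    intro j
    have h2 : ∫ ω, (g (X j ω) - χ).im ∂P = (∫ ω, (g (X j ω) - χ) ∂P).im := by
      simpa using integral_im (hintY j)
    rw [hIm]
    simp only []
    rw [h2, hEY j]
    simp
  have hindR : ∀ N : ℕ, IndepFun (∑ j ∈ range N, R j) (R N) P := by
    intro N
    have hiR : iIndepFun
        (fun j => (fun x => (g x - χ).re) ∘ X j) P :=
      hindep.comp (fun _ => fun x => (g x - χ).re)
        (fun _ => Complex.measurable_re.comp (hgm.sub measurable_const))
    exact hiR.indepFun_finsetSum_of_notMem
      (fun i => Complex.measurable_re.comp ((hgm.sub measurable_const).comp (hmeas i)))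
      Finset.notMem_range_self
  have hindI : ∀ N : ℕ, IndepFun (∑ j ∈ range N, Im j) (Im N) P := by
    intro N
    have hiI : iIndepFun
        (fun j => (fun x => (g x - χ).im) ∘ X j) P :=
      hindep.comp (fun _ => fun x => (g x - χ).im)
        (fun _ => Complex.measurable_im.comp (hgm.sub measurable_const))
    exact hiI.indepFun_finsetSum_of_notMem
      (fun i => Complex.measurable_im.comp ((hgm.sub measurable_const).comp (hmeas i)))
      Finset.notMem_range_self
  have hRm := moment_bound P R hRmeas hbddR hcentR hindR m n
  have hIm2 := moment_bound P Im hImeas hbddI hcentI hindI m n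
  -- the centered empirical CF
  set Z : Ω → ℂ := fun ω => empCharFun X n ω s - χ with hZ
  have hZeq : ∀ ω, Z ω = (n:ℂ)⁻¹ * ∑ j ∈ range n, (g (X j ω) - χ) := by
    intro ω
    rw [hZ]
    simp only [empCharFun]
    rw [Finset.sum_sub_distrib, Finset.sum_const, Finset.card_range, mul_sub]
    congr 1
    rw [nsmul_eq_mul, ← mul_assoc, inv_mul_cancel₀ hnC0, one_mul]
  have hZre : ∀ ω, (Z ω).re = (n:ℝ)⁻¹ * (∑ j ∈ range n, R j) ω := by
    intro ω
    rw [hZeq ω]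
    have : ((n:ℂ))⁻¹ = (((n:ℝ)⁻¹ : ℝ) : ℂ) := by push_cast; ring
    rw [this, Complex.re_ofReal_mul, Complex.re_sum]
    simp [hR, Finset.sum_apply]
  have hZim : ∀ ω, (Z ω).im = (n:ℝ)⁻¹ * (∑ j ∈ range n, Im j) ω := by
    intro ω
    rw [hZeq ω]
    have : ((n:ℂ))⁻¹ = (((n:ℝ)⁻¹ : ℝ) : ℂ) := by push_cast; ring
    rw [this, Complex.im_ofReal_mul, Complex.im_sum]
    simp [hIm, Finset.sum_apply]
  have hZmeas : Measurable Z := by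
    have : Measurable (fun ω => empCharFun X n ω s) := by
      apply Measurable.const_mul
      exact Finset.measurable_sum _ (fun j _ => hgm.comp (hmeas j))
    exact this.sub measurable_const
  have habsZ : ∀ ω, ‖Z ω‖ ≤ 2 := by
    intro ω
    rw [hZeq ω]
    rw [norm_mul, norm_inv, Complex.norm_natCast]
    calc (↑n)⁻¹ * ‖∑ j ∈ range n, (g (X j ω) - χ)‖
        ≤ (↑n)⁻¹ * ∑ j ∈ range n, ‖g (X j ω) - χ‖ := by
          refine mul_le_mul_of_nonneg_left ?_ (by positivity)
          exact norm_sum_le _ _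
      _ ≤ (↑n)⁻¹ * ∑ _j ∈ range n, (2:ℝ) := by
          refine mul_le_mul_of_nonneg_left (Finset.sum_le_sum (fun j _ => habsY j ω)) (by positivity)
      _ = (↑n)⁻¹ * (n * 2) := by simp [mul_comm]
      _ = 2 := by field_simp
  -- pointwise bound on |Z|^{2m}
  set c : ℝ := ((n:ℝ)⁻¹)^(2*m) with hc
  have hc0 : 0 ≤ c := by positivity
  have hptw : ∀ ω, (‖Z ω‖)^(2*m)
      ≤ 2^m * (c * ((∑ j ∈ range n, R j) ω)^(2*m) + c * ((∑ j ∈ range n, Im j) ω)^(2*m)) := by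
    intro ω
    have h1 : (‖Z ω‖)^(2*m) = ((Z ω).re^2 + (Z ω).im^2)^m := by
      rw [pow_mul, Complex.sq_norm, Complex.normSq_apply]
      ring_nf
    rw [h1]
    have h2 : ((Z ω).re^2 + (Z ω).im^2)^m ≤ 2^m * (((Z ω).re^2)^m + ((Z ω).im^2)^m) :=
      add_pow_le_two_pow (sq_nonneg _) (sq_nonneg _) m
    refine h2.trans (le_of_eq ?_)
    rw [hZre ω, hZim ω, hc]
    ring
  -- integrate
  have hSRmeas : Measurable (∑ j ∈ range n, R j) := by
    have h : Measurable (fun ω => ∑ j ∈ range n, R j ω) :=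
      Finset.measurable_sum _ (fun j _ => hRmeas j)
    have he : (∑ j ∈ range n, R j) = (fun ω => ∑ j ∈ range n, R j ω) := by ext ω; simp
    rw [he]; exact h
  have hSImeas : Measurable (∑ j ∈ range n, Im j) := by
    have h : Measurable (fun ω => ∑ j ∈ range n, Im j ω) :=
      Finset.measurable_sum _ (fun j _ => hImeas j)
    have he : (∑ j ∈ range n, Im j) = (fun ω => ∑ j ∈ range n, Im j ω) := by ext ω; simp
    rw [he]; exact h
  have hSRbdd : ∀ ω, |(∑ j ∈ range n, R j) ω| ≤ 2*n := by
    intro ω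
    calc |(∑ j ∈ range n, R j) ω| = |∑ j ∈ range n, R j ω| := by simp [Finset.sum_apply]
      _ ≤ ∑ j ∈ range n, |R j ω| := Finset.abs_sum_le_sum_abs _ _
      _ ≤ ∑ _j ∈ range n, (2:ℝ) := Finset.sum_le_sum (fun j _ => hbddR j ω)
      _ = 2*n := by simp [mul_comm]
  have hSIbdd : ∀ ω, |(∑ j ∈ range n, Im j) ω| ≤ 2*n := by
    intro ω
    calc |(∑ j ∈ range n, Im j) ω| = |∑ j ∈ range n, Im j ω| := by simp [Finset.sum_apply]
      _ ≤ ∑ j ∈ range n, |Im j ω| := Finset.abs_sum_le_sum_abs _ _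
      _ ≤ ∑ _j ∈ range n, (2:ℝ) := Finset.sum_le_sum (fun j _ => hbddI j ω)
      _ = 2*n := by simp [mul_comm]
  have hintSR : Integrable (fun ω => ((∑ j ∈ range n, R j) ω)^(2*m)) P := by
    refine integrable_of_bdd (c := (2*n)^(2*m))
      (hSRmeas.pow_const _).aestronglyMeasurable (fun ω => ?_)
    rw [abs_pow]
    exact pow_le_pow_left₀ (abs_nonneg _) (hSRbdd ω) _
  have hintSI : Integrable (fun ω => ((∑ j ∈ range n, Im j) ω)^(2*m)) P := by
    refine integrable_of_bdd (c := (2*n)^(2*m))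
      (hSImeas.pow_const _).aestronglyMeasurable (fun ω => ?_)
    rw [abs_pow]
    exact pow_le_pow_left₀ (abs_nonneg _) (hSIbdd ω) _
  have habsZmeas : Measurable (fun ω => ‖Z ω‖) :=
    continuous_norm.measurable.comp hZmeas
  have hintabsZ : ∀ q : ℕ, Integrable (fun ω => (‖Z ω‖)^q) P := by
    intro q
    refine integrable_of_bdd (c := 2^q)
      (habsZmeas.pow_const q).aestronglyMeasurable (fun ω => ?_)
    rw [abs_pow, abs_of_nonneg (norm_nonneg _)]
    exact pow_le_pow_left₀ (norm_nonneg _) (habsZ ω) q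
  set B : ℝ := 2^(m+1) * momC m with hB
  have hB0 : 0 ≤ B := by
    have := momC_pos m
    rw [hB]; positivity
  have hEZ2m : ∫ ω, (‖Z ω‖)^(2*m) ∂P ≤ B * ((n:ℝ)^m)⁻¹ := by
    have hintRHS : Integrable (fun ω =>
        2^m * (c * ((∑ j ∈ range n, R j) ω)^(2*m) + c * ((∑ j ∈ range n, Im j) ω)^(2*m))) P :=
      (((hintSR.const_mul c).add (hintSI.const_mul c)).const_mul (2^m))
    calc ∫ ω, (‖Z ω‖)^(2*m) ∂P
        ≤ ∫ ω, 2^m * (c * ((∑ j ∈ range n, R j) ω)^(2*m)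
            + c * ((∑ j ∈ range n, Im j) ω)^(2*m)) ∂P :=
          integral_mono (hintabsZ (2*m)) hintRHS hptw
      _ = 2^m * (c * ∫ ω, ((∑ j ∈ range n, R j) ω)^(2*m) ∂P
            + c * ∫ ω, ((∑ j ∈ range n, Im j) ω)^(2*m) ∂P) := by
          rw [integral_const_mul, integral_add (hintSR.const_mul c) (hintSI.const_mul c),
            integral_const_mul, integral_const_mul]
      _ ≤ 2^m * (c * (momC m * (n:ℝ)^m) + c * (momC m * (n:ℝ)^m)) := by
          have h2 : (0:ℝ) ≤ 2^m := by positivity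
          have l1 : c * ∫ ω, ((∑ j ∈ range n, R j) ω)^(2*m) ∂P ≤ c * (momC m * (n:ℝ)^m) :=
            mul_le_mul_of_nonneg_left hRm hc0
          have l2 : c * ∫ ω, ((∑ j ∈ range n, Im j) ω)^(2*m) ∂P ≤ c * (momC m * (n:ℝ)^m) :=
            mul_le_mul_of_nonneg_left hIm2 hc0
          have := add_le_add l1 l2
          exact mul_le_mul_of_nonneg_left this h2
      _ = B * (c * (n:ℝ)^m) := by rw [hB]; ring
      _ = B * ((n:ℝ)^m)⁻¹ := by
          congr 1
          rw [hc, inv_pow]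
          have h2m : (n:ℝ)^(2*m) = (n:ℝ)^m * (n:ℝ)^m := by rw [two_mul, pow_add]
          rw [h2m]
          field_simp
  -- Cauchy-Schwarz via variance
  set f : Ω → ℝ := fun ω => (‖Z ω‖)^m with hf
  have hfmeas : AEStronglyMeasurable f P := (habsZmeas.pow_const m).aestronglyMeasurable
  have hmem : MemLp f 2 P := by
    refine memLp_of_bounded (a := 0) (b := 2^m) (ae_of_all _ (fun ω => ?_)) hfmeas 2
    constructor
    · positivity
    · exact pow_le_pow_left₀ (norm_nonneg _) (habsZ ω) m
  have hvar := variance_nonneg f P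
  rw [variance_eq_sub hmem] at hvar
  have hsq : (∫ ω, f ω ∂P)^2 ≤ ∫ ω, (‖Z ω‖)^(2*m) ∂P := by
    have he : ∫ ω, (f^2) ω ∂P = ∫ ω, (‖Z ω‖)^(2*m) ∂P := by
      refine integral_congr_ae (ae_of_all _ (fun ω => ?_))
      simp only [Pi.pow_apply, hf]
      rw [← pow_mul, mul_comm m 2]
    rw [he] at hvar
    linarith
  have hEf0 : 0 ≤ ∫ ω, f ω ∂P := integral_nonneg (fun ω => by positivity)
  have hfinal : ∫ ω, f ω ∂P ≤ Real.sqrt (B * ((n:ℝ)^m)⁻¹) := by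
    rw [show Real.sqrt (B * ((n:ℝ)^m)⁻¹) = Real.sqrt (B * ((n:ℝ)^m)⁻¹) from rfl]
    refine (Real.le_sqrt hEf0 (by positivity)).2 ?_
    exact hsq.trans hEZ2m
  calc ∫ ω, ‖empCharFun X n ω s - charFun P (X 0) s‖ ^ m ∂P
      = ∫ ω, f ω ∂P := by rfl
    _ ≤ Real.sqrt (B * ((n:ℝ)^m)⁻¹) := hfinal
    _ = Real.sqrt B * Real.sqrt (((n:ℝ)^m)⁻¹) := Real.sqrt_mul hB0 _

end ecf

section ecf2
variable {Ω : Type*} [MeasurableSpace Ω] (P : Measure Ω) [IsProbabilityMeasure P]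
    {d : ℕ} (X : ℕ → Ω → (Fin d → ℝ)) (s : Fin d → ℝ)

lemma emp_abs_le (n : ℕ) (hn : 1 ≤ n) (ω : Ω) :
    ‖empCharFun X n ω s‖ ≤ 1 := by
  have hn0 : (n:ℝ) ≠ 0 := Nat.cast_ne_zero.2 (by omega)
  unfold empCharFun
  rw [norm_mul, norm_inv, Complex.norm_natCast]
  calc (↑n)⁻¹ * ‖∑ j ∈ Finset.range n,
        Complex.exp (Complex.I * ((∑ k, s k * X j ω k : ℝ):ℂ))‖
      ≤ (↑n)⁻¹ * ∑ j ∈ Finset.range n,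
          ‖Complex.exp (Complex.I * ((∑ k, s k * X j ω k : ℝ):ℂ))‖ :=
        mul_le_mul_of_nonneg_left (norm_sum_le _ _) (by positivity)
    _ = (↑n)⁻¹ * ∑ _j ∈ Finset.range n, (1:ℝ) := by
        congr 1
        exact Finset.sum_congr rfl (fun j _ => gabs s (X j ω))
    _ = 1 := by
        rw [Finset.sum_const, Finset.card_range, nsmul_eq_mul, mul_one,
          inv_mul_cancel₀ hn0]

lemma charFun_meas (hX : Measurable (X 0)) (c : ℝ) :
    Measurable (fun t : Fin d → ℝ => charFun P (X 0) (c • t)) := by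
  have hF : StronglyMeasurable (fun p : (Fin d → ℝ) × Ω =>
      Complex.exp (Complex.I * ((∑ k, (c • p.1) k * X 0 p.2 k : ℝ) : ℂ))) := by
    apply Measurable.stronglyMeasurable
    apply Complex.measurable_exp.comp
    apply Measurable.const_mul
    apply Complex.measurable_ofReal.comp
    refine Finset.measurable_sum (f := fun k (p : (Fin d → ℝ) × Ω) => (c • p.1) k * X 0 p.2 k)
      Finset.univ (fun k _ => ?_)
    have h1 : Measurable (fun p : (Fin d → ℝ) × Ω => (c • p.1) k) := by
      simp only [Pi.smul_apply, smul_eq_mul]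
      have h2 : Measurable (fun p : (Fin d → ℝ) × Ω => p.1 k) :=
        (measurable_pi_apply k).comp measurable_fst
      exact h2.const_mul c
    exact h1.mul ((measurable_pi_apply k).comp (hX.comp measurable_snd))
  exact hF.integral_prod_right'.measurable

lemma emp_meas (hmeas : ∀ i, Measurable (X i)) (n : ℕ) (c : ℝ) :
    Measurable (fun p : Ω × (Fin d → ℝ) => empCharFun X n p.1 (c • p.2)) := by
  unfold empCharFun
  apply Measurable.const_mul
  apply Finset.measurable_sum
  intro j _
  apply Complex.measurable_exp.comp
  apply Measurable.const_mul
  apply Complex.measurable_ofReal.comp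
  refine Finset.measurable_sum (f := fun k (p : Ω × (Fin d → ℝ)) => (c • p.2) k * X j p.1 k)
    Finset.univ (fun k _ => ?_)
  have h1 : Measurable (fun p : Ω × (Fin d → ℝ) => (c • p.2) k) := by
    simp only [Pi.smul_apply, smul_eq_mul]
    have h2 : Measurable (fun p : Ω × (Fin d → ℝ) => p.2 k) :=
      (measurable_pi_apply k).comp measurable_snd
    exact h2.const_mul c
  exact h1.mul ((measurable_pi_apply k).comp ((hmeas j).comp measurable_fst))

end ecf2


/-- Let `X, X₁, X₂, …` be i.i.d. random vectors in `ℝ^d` whose characteristic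
function `χ` satisfies Cramér's condition `limsup_{‖t‖→∞} |χ(t)| < 1`, and
let `χ*ₙ` be the empirical characteristic function.  Fix `u > 0`, `ν > 0`,
`C > 0` and an integer `m ≥ 2`.  Then
`P( ∫ |χ*ₙ(n^{-1/2+u}t) − χ(n^{-1/2+u}t)|^m exp(−C‖t‖^{1/2}) dt
      > n^{-d(u+1)−(ν+3)/2} ) = O(n^{-(m/2 − d(u+1) − (ν+3)/2)})`;
in particular, for any `λ > 0`, if `m/2 − d(u+1) − (ν+3)/2 ≥ λ` then this
probability is `O(n^{-λ})`. -/
theorem stmt_11 {Ω : Type*} [MeasurableSpace Ω] (P : Measure Ω) [IsProbabilityMeasure P]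
    (d : ℕ) (X : ℕ → Ω → (Fin d → ℝ))
    (hmeas : ∀ i, Measurable (X i))
    (hindep : iIndepFun X P)
    (hident : ∀ i, IdentDistrib (X i) (X 0) P P)
    (hcramer : Filter.limsup (fun t : Fin d → ℝ => ‖charFun P (X 0) t‖)
        (Filter.comap (fun t => Real.sqrt (∑ i, t i ^ 2)) Filter.atTop) < 1)
    (u ν C : ℝ) (hu : 0 < u) (hν : 0 < ν) (hC : 0 < C)
    (m : ℕ) (hm : 2 ≤ m) :
    (∃ D : ℝ, ∀ n : ℕ, 1 ≤ n →
      P {ω | (n : ℝ) ^ (-(d : ℝ) * (u + 1) - (ν + 3) / 2) <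
          ∫ t : Fin d → ℝ,
            ‖empCharFun X n ω ((n : ℝ) ^ (-(1 : ℝ) / 2 + u) • t)
                - charFun P (X 0) ((n : ℝ) ^ (-(1 : ℝ) / 2 + u) • t)‖ ^ m
              * Real.exp (-C * Real.sqrt (∑ i, t i ^ 2) ^ ((1 : ℝ) / 2))}
        ≤ ENNReal.ofReal
            (D * (n : ℝ) ^ (-((m : ℝ) / 2 - (d : ℝ) * (u + 1) - (ν + 3) / 2)))) ∧
    (∀ lam : ℝ, 0 < lam → lam ≤ (m : ℝ) / 2 - (d : ℝ) * (u + 1) - (ν + 3) / 2 →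
      ∃ D' : ℝ, ∀ n : ℕ, 1 ≤ n →
        P {ω | (n : ℝ) ^ (-(d : ℝ) * (u + 1) - (ν + 3) / 2) <
            ∫ t : Fin d → ℝ,
              ‖empCharFun X n ω ((n : ℝ) ^ (-(1 : ℝ) / 2 + u) • t)
                  - charFun P (X 0) ((n : ℝ) ^ (-(1 : ℝ) / 2 + u) • t)‖ ^ m
                * Real.exp (-C * Real.sqrt (∑ i, t i ^ 2) ^ ((1 : ℝ) / 2))}
          ≤ ENNReal.ofReal (D' * (n : ℝ) ^ (-lam))) := by
  classical
  -- weight function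
  have hwt_int : Integrable (fun t : Fin d → ℝ =>
      Real.exp (-C * Real.sqrt (∑ i, t i ^ 2) ^ ((1:ℝ)/2))) := weight_integrable d C hC
  have hwt_meas : Measurable (fun t : Fin d → ℝ =>
      Real.exp (-C * Real.sqrt (∑ i, t i ^ 2) ^ ((1:ℝ)/2))) := by fun_prop
  set wt : (Fin d → ℝ) → ℝ := fun t =>
    Real.exp (-C * Real.sqrt (∑ i, t i ^ 2) ^ ((1:ℝ)/2)) with hwt
  have hwt_pos : ∀ t, 0 < wt t := fun t => Real.exp_pos _
  set W : ℝ := ∫ t, wt t with hW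
  have hW0 : 0 ≤ W := integral_nonneg fun t => (hwt_pos t).le
  set Km : ℝ := Real.sqrt (2^(m+1) * momC m) with hKm
  have hKm0 : 0 ≤ Km := Real.sqrt_nonneg _
  set D : ℝ := Km * W with hD
  have hD0 : 0 ≤ D := mul_nonneg hKm0 hW0
  have key : ∀ n : ℕ, 1 ≤ n →
      P {ω | (n : ℝ) ^ (-(d : ℝ) * (u + 1) - (ν + 3) / 2) <
          ∫ t : Fin d → ℝ,
            ‖empCharFun X n ω ((n : ℝ) ^ (-(1 : ℝ) / 2 + u) • t)
                - charFun P (X 0) ((n : ℝ) ^ (-(1 : ℝ) / 2 + u) • t)‖ ^ m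
              * Real.exp (-C * Real.sqrt (∑ i, t i ^ 2) ^ ((1 : ℝ) / 2))}
        ≤ ENNReal.ofReal
            (D * (n : ℝ) ^ (-((m : ℝ) / 2 - (d : ℝ) * (u + 1) - (ν + 3) / 2))) := by
    intro n hn
    have hnpos : (0:ℝ) < n := by exact_mod_cast Nat.lt_of_lt_of_le Nat.zero_lt_one hn
    set c : ℝ := (n : ℝ) ^ (-(1 : ℝ) / 2 + u) with hc
    set f : Ω → (Fin d → ℝ) → ℝ := fun ω t =>
      ‖empCharFun X n ω (c • t) - charFun P (X 0) (c • t)‖ ^ m * wt t with hf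
    have hf_nonneg : ∀ ω t, 0 ≤ f ω t :=
      fun ω t => mul_nonneg (pow_nonneg (norm_nonneg _) m) (hwt_pos t).le
    -- joint measurability
    have hjm : Measurable (Function.uncurry f) := by
      have h1 : Measurable (fun p : Ω × (Fin d → ℝ) =>
          empCharFun X n p.1 (c • p.2) - charFun P (X 0) (c • p.2)) :=
        (emp_meas X hmeas n c).sub ((charFun_meas P X (hmeas 0) c).comp measurable_snd)
      exact ((continuous_norm.measurable.comp h1).pow_const m).mul
        (hwt_meas.comp measurable_snd)
    -- bound |f| ≤ 2^m * wt
    have habs2 : ∀ ω t, ‖empCharFun X n ω (c • t)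
        - charFun P (X 0) (c • t)‖ ≤ 2 := by
      intro ω t
      calc ‖empCharFun X n ω (c • t) - charFun P (X 0) (c • t)‖
          ≤ ‖empCharFun X n ω (c • t)‖ + ‖charFun P (X 0) (c • t)‖ := by
            simpa using
              norm_sub_le (empCharFun X n ω (c • t)) (charFun P (X 0) (c • t))
        _ ≤ 1 + 1 := add_le_add (emp_abs_le X (c • t) n hn ω)
            (charFun_abs_le P X (c • t) (hmeas 0))
        _ = 2 := by norm_num
    have hfle : ∀ ω t, f ω t ≤ 2^m * wt t := by
      intro ω t
      rw [hf]
      exact mul_le_mul_of_nonneg_right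
        (pow_le_pow_left₀ (norm_nonneg _) (habs2 ω t) m) (hwt_pos t).le
    have hf_int : ∀ ω, Integrable (f ω) := by
      intro ω
      refine Integrable.mono' (hwt_int.const_mul (2^m))
        ((hjm.comp (measurable_prodMk_left : Measurable fun t : Fin d → ℝ => (ω, t))).aestronglyMeasurable)
        (ae_of_all _ (fun t => ?_))
      rw [Real.norm_eq_abs, abs_of_nonneg (hf_nonneg ω t)]
      exact hfle ω t
    -- pass to lintegral
    set G : Ω → (Fin d → ℝ) → ENNReal := fun ω t => ENNReal.ofReal (f ω t) with hG
    have hGm : Measurable (Function.uncurry G) :=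
      ENNReal.measurable_ofReal.comp hjm
    set H : Ω → ENNReal := fun ω => ∫⁻ t, G ω t with hH
    have hHm : Measurable H := Measurable.lintegral_prod_right hGm
    set a : ℝ := (n : ℝ) ^ (-(d : ℝ) * (u + 1) - (ν + 3) / 2) with ha
    have ha0 : 0 < a := Real.rpow_pos_of_pos hnpos _
    have hsub : {ω | a < ∫ t, f ω t} ⊆ {ω | ENNReal.ofReal a ≤ H ω} := by
      intro ω hω
      have h1 : ENNReal.ofReal a ≤ ENNReal.ofReal (∫ t, f ω t) :=
        ENNReal.ofReal_le_ofReal (le_of_lt hω)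
      rwa [ofReal_integral_eq_lintegral_ofReal (hf_int ω)
        (ae_of_all _ (fun t => hf_nonneg ω t))] at h1
    have markov := mul_meas_ge_le_lintegral₀ hHm.aemeasurable (ENNReal.ofReal a) (μ := P)
    have hswap : ∫⁻ ω, H ω ∂P = ∫⁻ t, ∫⁻ ω, G ω t ∂P := by
      rw [hH]
      exact lintegral_lintegral_swap hGm.aemeasurable
    -- the inner bound from the moment estimate
    have hsqrt : Real.sqrt (((n:ℝ)^m)⁻¹) = (n:ℝ) ^ (-(m:ℝ)/2) := by
      have h1 : ((n:ℝ)^m)⁻¹ = (n:ℝ) ^ (-(m:ℝ)) := by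
        rw [← Real.rpow_natCast (n:ℝ) m, ← Real.rpow_neg hnpos.le]
      rw [h1, Real.sqrt_eq_rpow, ← Real.rpow_mul hnpos.le]
      congr 1
      ring
    have hinner : ∀ t, ∫⁻ ω, G ω t ∂P
        ≤ ENNReal.ofReal (Km * (n:ℝ) ^ (-(m:ℝ)/2)) * ENNReal.ofReal (wt t) := by
      intro t
      set A : Ω → ℝ := fun ω =>
        ‖empCharFun X n ω (c • t) - charFun P (X 0) (c • t)‖ ^ m with hAdef
      have hA_meas : Measurable A := by
        have h1 : Measurable (fun ω : Ω =>
            empCharFun X n ω (c • t) - charFun P (X 0) (c • t)) :=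
          ((emp_meas X hmeas n c).comp (measurable_prodMk_right (y := t))).sub
            measurable_const
        exact (continuous_norm.measurable.comp h1).pow_const m
      have hA_nonneg : ∀ ω, 0 ≤ A ω := fun ω => pow_nonneg (norm_nonneg _) m
      have hA_int : Integrable A P := by
        refine integrable_of_bdd (c := 2^m) hA_meas.aestronglyMeasurable (fun ω => ?_)
        rw [abs_of_nonneg (hA_nonneg ω)]
        exact pow_le_pow_left₀ (norm_nonneg _) (habs2 ω t) m
      have hA_bound : ∫ ω, A ω ∂P ≤ Km * (n:ℝ) ^ (-(m:ℝ)/2) := by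
        have h2 := ecf_moment P X (c • t) hmeas hindep hident m n hn
        rw [hsqrt] at h2
        exact h2
      calc ∫⁻ ω, G ω t ∂P
          = ∫⁻ ω, ENNReal.ofReal (A ω) * ENNReal.ofReal (wt t) ∂P := by
            refine lintegral_congr (fun ω => ?_)
            rw [← ENNReal.ofReal_mul (hA_nonneg ω)]
        _ = (∫⁻ ω, ENNReal.ofReal (A ω) ∂P) * ENNReal.ofReal (wt t) :=
            lintegral_mul_const'' _ ((ENNReal.measurable_ofReal.comp hA_meas)).aemeasurable
        _ ≤ ENNReal.ofReal (Km * (n:ℝ) ^ (-(m:ℝ)/2)) * ENNReal.ofReal (wt t) := by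
            refine mul_le_mul_left ?_ _
            rw [← ofReal_integral_eq_lintegral_ofReal hA_int (ae_of_all _ hA_nonneg)]
            exact ENNReal.ofReal_le_ofReal hA_bound
    have hchain : ENNReal.ofReal a * P {ω | ENNReal.ofReal a ≤ H ω}
        ≤ ENNReal.ofReal (Km * (n:ℝ) ^ (-(m:ℝ)/2)) * ENNReal.ofReal W := by
      refine markov.trans ?_
      rw [hswap]
      calc ∫⁻ t, ∫⁻ ω, G ω t ∂P
          ≤ ∫⁻ t, ENNReal.ofReal (Km * (n:ℝ) ^ (-(m:ℝ)/2)) * ENNReal.ofReal (wt t) :=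
            lintegral_mono hinner
        _ = ENNReal.ofReal (Km * (n:ℝ) ^ (-(m:ℝ)/2)) * ∫⁻ t, ENNReal.ofReal (wt t) :=
            lintegral_const_mul _ (ENNReal.measurable_ofReal.comp hwt_meas)
        _ = ENNReal.ofReal (Km * (n:ℝ) ^ (-(m:ℝ)/2)) * ENNReal.ofReal W := by
            rw [← ofReal_integral_eq_lintegral_ofReal hwt_int
              (ae_of_all _ (fun t => (hwt_pos t).le))]
    have hP2 : P {ω | ENNReal.ofReal a ≤ H ω}
        ≤ (ENNReal.ofReal (Km * (n:ℝ) ^ (-(m:ℝ)/2)) * ENNReal.ofReal W) / ENNReal.ofReal a := by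
      rw [ENNReal.le_div_iff_mul_le (Or.inl (ENNReal.ofReal_pos.2 ha0).ne')
        (Or.inl ENNReal.ofReal_ne_top)]
      calc P {ω | ENNReal.ofReal a ≤ H ω} * ENNReal.ofReal a
          = ENNReal.ofReal a * P {ω | ENNReal.ofReal a ≤ H ω} := mul_comm _ _
        _ ≤ _ := hchain
    have hfinal : (ENNReal.ofReal (Km * (n:ℝ) ^ (-(m:ℝ)/2)) * ENNReal.ofReal W)
          / ENNReal.ofReal a
        = ENNReal.ofReal (D * (n : ℝ) ^ (-((m : ℝ) / 2 - (d : ℝ) * (u + 1) - (ν + 3) / 2))) := by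
      rw [← ENNReal.ofReal_mul (by positivity), ← ENNReal.ofReal_div_of_pos ha0]
      congr 1
      rw [hD, ha]
      have hE : -((m : ℝ) / 2 - (d : ℝ) * (u + 1) - (ν + 3) / 2)
          = (-(m:ℝ)/2) - (-(d : ℝ) * (u + 1) - (ν + 3) / 2) := by ring
      rw [hE, Real.rpow_sub hnpos (-(m:ℝ)/2) (-(d:ℝ) * (u + 1) - (ν + 3) / 2)]
      generalize ((n:ℝ) ^ (-(m:ℝ)/2) : ℝ) = p
      generalize ((n:ℝ) ^ (-(d:ℝ) * (u + 1) - (ν + 3) / 2) : ℝ) = q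
      ring
    calc P {ω | a < ∫ t, f ω t}
        ≤ P {ω | ENNReal.ofReal a ≤ H ω} := measure_mono hsub
      _ ≤ (ENNReal.ofReal (Km * (n:ℝ) ^ (-(m:ℝ)/2)) * ENNReal.ofReal W)
            / ENNReal.ofReal a := hP2
      _ = ENNReal.ofReal
            (D * (n : ℝ) ^ (-((m : ℝ) / 2 - (d : ℝ) * (u + 1) - (ν + 3) / 2))) := hfinal
  refine ⟨⟨D, key⟩, ?_⟩
  intro lam hlam1 hlam2
  refine ⟨max D 0, fun n hn => (key n hn).trans (ENNReal.ofReal_le_ofReal ?_)⟩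
  have hn1 : (1:ℝ) ≤ (n:ℝ) := by exact_mod_cast hn
  have h1 : (n:ℝ) ^ (-((m : ℝ) / 2 - (d : ℝ) * (u + 1) - (ν + 3) / 2)) ≤ (n:ℝ) ^ (-lam) :=
    Real.rpow_le_rpow_of_exponent_le hn1 (by linarith)
  have h2 : (0:ℝ) ≤ (n:ℝ) ^ (-((m : ℝ) / 2 - (d : ℝ) * (u + 1) - (ν + 3) / 2)) :=
    Real.rpow_nonneg (by positivity) _
  calc D * (n:ℝ) ^ (-((m : ℝ) / 2 - (d : ℝ) * (u + 1) - (ν + 3) / 2))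
      ≤ max D 0 * (n:ℝ) ^ (-((m : ℝ) / 2 - (d : ℝ) * (u + 1) - (ν + 3) / 2)) :=
        mul_le_mul_of_nonneg_right (le_max_left D 0) h2
    _ ≤ max D 0 * (n:ℝ) ^ (-lam) :=
        mul_le_mul_of_nonneg_left h1 (le_max_right D 0)
end
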